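/- arXiv:2411.07779 — 10 statements merged into one kernel-verified Lean document; each statement's English description precedes it below -/
import Mathlib

section
/- Let N ≥ 1 be an integer and 𝐭 = (k₀,ℓ₀,…,k_{N-1},ℓ_{N-1}) ∈ ℕ̄₊^{2N}. Then in R one has γ_𝐭 = Σ_{τ ∈ {0,1}^{2N}} (−1)^{|τ|₁} α^{τ·𝐭ₑ} β^{τ·𝐭ₒ} Σ_{j=0}^{|τ|₁₀} binom(|τ|₁₀, j) (−1)^j 𝔟_{N−j}, where 𝔟_m = (αβ·(1−α)⁻¹(1−β)⁻¹)^m ∈ R. -/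
open MvPowerSeries Finset

noncomputable section

/-- The ring `R = ℂ[[α,β]]` of formal power series in two commuting variables. -/
abbrev R2 : Type := MvPowerSeries (Fin 2) ℂ

/-- The variable `α`. -/
def pa : R2 := MvPowerSeries.X 0
/-- The variable `β`. -/
def pb : R2 := MvPowerSeries.X 1

/-- The matrix `A₀ = [[1,0],[α,β]]`. -/
def A0 : Matrix (Fin 2) (Fin 2) R2 := !![1, 0; pa, pb]
/-- The matrix `A₁ = [[α,β],[0,1]]`. -/
def A1 : Matrix (Fin 2) (Fin 2) R2 := !![pa, pb; 0, 1]
/-- The matrix `A₀^∞ = [[1,0],[α(1−β)⁻¹,0]]`. -/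
def A0inf : Matrix (Fin 2) (Fin 2) R2 := !![1, 0; pa * (1 - pb)⁻¹, 0]
/-- The matrix `A₁^∞ = [[0,β(1−α)⁻¹],[0,1]]`. -/
def A1inf : Matrix (Fin 2) (Fin 2) R2 := !![0, pb * (1 - pa)⁻¹; 0, 1]

/-- Extended power: `A^k` for `k ∈ ℕ`, and `Ainf` for `k = ∞`. -/
def powE (A Ainf : Matrix (Fin 2) (Fin 2) R2) : ℕ∞ → Matrix (Fin 2) (Fin 2) R2 :=
  fun k => WithTop.recTopCoe Ainf (fun n => A ^ n) k

/-- `M(𝐭) = A₁^{k₀} A₀^{ℓ₀} ⋯ A₁^{k_{N-1}} A₀^{ℓ_{N-1}}`, where the extended binary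
expansion `𝐭 = (k₀,ℓ₀,…,k_{N-1},ℓ_{N-1})` is encoded as `t : Fin (2*N) → ℕ∞`
(`k_j = t (2j)`, `ℓ_j = t (2j+1)`). -/
def Mmat {N : ℕ} (t : Fin (2 * N) → ℕ∞) : Matrix (Fin 2) (Fin 2) R2 :=
  ((List.finRange N).map (fun j =>
    powE A1 A1inf (t ⟨2 * j.val, by have := j.isLt; omega⟩) *
    powE A0 A0inf (t ⟨2 * j.val + 1, by have := j.isLt; omega⟩))).prod

/-- `γ_𝐭`, the (1,1) entry of `M(𝐭)`. -/
def gam {N : ℕ} (t : Fin (2 * N) → ℕ∞) : R2 := Mmat t 0 0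

/-- `x^e` for `e ∈ ℕ̄`, with the convention `x^∞ = 0`. -/
def xpowE (x : R2) : ℕ∞ → R2 := fun e => WithTop.recTopCoe 0 (fun n => x ^ n) e

/-- Inner product `τ·𝐭` computed in `ℕ̄ = ℕ ∪ {∞}` (`0·∞ = 0`, `a+∞ = ∞`). -/
def dotE {M : ℕ} (τ : Fin M → Bool) (t : Fin M → ℕ∞) : ℕ∞ :=
  ∑ i, if τ i then t i else 0

/-- `𝐭ₑ = (k₀,0,k₁,0,…,k_{N-1},0)`. -/
def tev {M : ℕ} (t : Fin M → ℕ∞) : Fin M → ℕ∞ := fun i => if i.val % 2 = 0 then t i else 0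
/-- `𝐭ₒ = (0,ℓ₀,0,ℓ₁,…,0,ℓ_{N-1})`. -/
def tod {M : ℕ} (t : Fin M → ℕ∞) : Fin M → ℕ∞ := fun i => if i.val % 2 = 1 then t i else 0

/-- Extension of `τ : Fin M → Bool` to `ℕ` by `false`. -/
def extB {M : ℕ} (τ : Fin M → Bool) : ℕ → Bool :=
  fun n => if h : n < M then τ ⟨n, h⟩ else false

/-- `|τ|₁ = #{0 ≤ j < M : τ_j = 1}`. -/
def wt1 {M : ℕ} (τ : Fin M → Bool) : ℕ := (Finset.univ.filter (fun i => τ i = true)).card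

/-- `|τ|₁₀ = #{0 ≤ j < M−1 : (τ_j,τ_{j+1}) = (1,0)}`. -/
def wt10 {M : ℕ} (τ : Fin M → Bool) : ℕ :=
  ((Finset.range (M - 1)).filter (fun j => extB τ j = true ∧ extB τ (j + 1) = false)).card

namespace GammaAux2
open Matrix


lemma ha : (1 - pa) * (1 - pa)⁻¹ = 1 := by
  apply MvPowerSeries.mul_inv_cancel; simp [pa]
lemma hb : (1 - pb) * (1 - pb)⁻¹ = 1 := by
  apply MvPowerSeries.mul_inv_cancel; simp [pb]

def ia : R2 := (1 - pa)⁻¹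
def ib : R2 := (1 - pb)⁻¹

lemma ia_mul : (1 - pa) * ia = 1 := ha
lemma ib_mul : (1 - pb) * ib = 1 := hb
def bb : R2 := pa * pb * (ia * ib)

def colV : Bool → Bool → (Fin 2 → R2)
  | true,  false => ![pb * ia, 1]
  | true,  true  => ![1, 0]
  | false, false => ![1, pa * ib]
  | false, true  => ![0, 1]

def rowV : Bool → Bool → (Fin 2 → R2)
  | true,  false => ![0, 1]
  | true,  true  => ![1, -(pb * ia)]
  | false, false => ![1, 0]
  | false, true  => ![-(pa * ib), 1]

def Bm (ty bit : Bool) : Matrix (Fin 2) (Fin 2) R2 := vecMulVec (colV ty bit) (rowV ty bit)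

lemma vmv_mul_vmv (u v w x : Fin 2 → R2) :
    vecMulVec u v * vecMulVec w x = (v ⬝ᵥ w) • vecMulVec u x := by
  apply Matrix.ext
  intro i j
  simp only [Matrix.mul_apply, Matrix.smul_apply, Matrix.vecMulVec_apply, dotProduct,
    Fin.sum_univ_two, smul_eq_mul]
  ring

lemma xpowE_zero (x : R2) : xpowE x 0 = 1 := rfl
lemma xpowE_coe (x : R2) (n : ℕ) : xpowE x (n : ℕ∞) = x ^ n := rfl
lemma xpowE_top (x : R2) : xpowE x ⊤ = 0 := rfl

lemma xpowE_add (x : R2) (e f : ℕ∞) : xpowE x (e + f) = xpowE x e * xpowE x f := by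
  induction e using ENat.recTopCoe with
  | top => rw [top_add, xpowE_top, zero_mul]
  | coe n =>
    induction f using ENat.recTopCoe with
    | top => rw [add_top, xpowE_top, mul_zero]
    | coe m =>
      show x ^ (n + m) = x ^ n * x ^ m
      exact pow_add x n m

lemma powE_A1 (e : ℕ∞) : powE A1 A1inf e = Bm true false + xpowE pa e • Bm true true := by
  induction e using ENat.recTopCoe with
  | top =>
    show A1inf = _
    rw [xpowE_top, zero_smul, add_zero]
    apply Matrix.ext
    intro i j
    fin_cases i <;> fin_cases j <;>
      simp [A1inf, Bm, vecMulVec_apply, colV, rowV, ia]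
  | coe n =>
    show A1 ^ n = Bm true false + (pa ^ n) • Bm true true
    induction n with
    | zero =>
      apply Matrix.ext
      intro i j
      fin_cases i <;> fin_cases j <;>
        simp [Bm, vecMulVec_apply, colV, rowV, Matrix.one_apply]
    | succ m ihm =>
      rw [pow_succ, ihm, add_mul, smul_mul_assoc]
      have h1 : Bm true false * A1 = Bm true false := by
        apply Matrix.ext
        intro i j
        fin_cases i <;> fin_cases j <;>
          · simp [Bm, A1, vecMulVec_apply, Matrix.mul_apply, Fin.sum_univ_two, colV, rowV]
      have h2 : Bm true true * A1 = pa • Bm true true := by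
        apply Matrix.ext
        intro i j
        fin_cases i <;> fin_cases j <;>
          · simp [Bm, A1, vecMulVec_apply, Matrix.mul_apply, Fin.sum_univ_two, colV, rowV]
            try linear_combination (-pb) * ia_mul
      rw [h1, h2, smul_smul, ← pow_succ]

lemma powE_A0 (e : ℕ∞) : powE A0 A0inf e = Bm false false + xpowE pb e • Bm false true := by
  induction e using ENat.recTopCoe with
  | top =>
    show A0inf = _
    rw [xpowE_top, zero_smul, add_zero]
    apply Matrix.ext
    intro i j
    fin_cases i <;> fin_cases j <;>
      simp [A0inf, Bm, vecMulVec_apply, colV, rowV, ib]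
  | coe n =>
    show A0 ^ n = Bm false false + (pb ^ n) • Bm false true
    induction n with
    | zero =>
      apply Matrix.ext
      intro i j
      fin_cases i <;> fin_cases j <;>
        simp [Bm, vecMulVec_apply, colV, rowV, Matrix.one_apply]
    | succ m ihm =>
      rw [pow_succ, ihm, add_mul, smul_mul_assoc]
      have h1 : Bm false false * A0 = Bm false false := by
        apply Matrix.ext
        intro i j
        fin_cases i <;> fin_cases j <;>
          · simp [Bm, A0, vecMulVec_apply, Matrix.mul_apply, Fin.sum_univ_two, colV, rowV]
      have h2 : Bm false true * A0 = pb • Bm false true := by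
        apply Matrix.ext
        intro i j
        fin_cases i <;> fin_cases j <;>
          · simp [Bm, A0, vecMulVec_apply, Matrix.mul_apply, Fin.sum_univ_two, colV, rowV]
            try linear_combination (-pa) * ib_mul
      rw [h1, h2, smul_smul, ← pow_succ]

/-! ### Splitting machinery -/

def tyb (j : ℕ) : Bool := decide (j % 2 = 0)

def pathS {M : ℕ} (τ : Fin M → Bool) : R2 :=
  ∏ j ∈ Finset.range (M - 1), (rowV (tyb j) (extB τ j) ⬝ᵥ colV (tyb (j+1)) (extB τ (j+1)))

def shiftB {n : ℕ} (τ : Fin (2*(n+1)) → Bool) : Fin (2*n) → Bool :=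
  fun i => τ ⟨i.val+2, by omega⟩
def shiftT {n : ℕ} (t : Fin (2*(n+1)) → ℕ∞) : Fin (2*n) → ℕ∞ :=
  fun i => t ⟨i.val+2, by omega⟩

lemma extB_shift {n : ℕ} (τ : Fin (2*(n+1)) → Bool) (j : ℕ) :
    extB (shiftB τ) j = extB τ (j+2) := by
  unfold extB shiftB
  by_cases h : j < 2*n
  · rw [dif_pos h, dif_pos (by omega)]
  · rw [dif_neg h, dif_neg (by omega)]

lemma tyb_shift (j : ℕ) : tyb (j+2) = tyb j := by unfold tyb; rw [Nat.add_mod_right]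

lemma sum_range_split {M : Type*} [AddCommMonoid M] (m : ℕ) (f : ℕ → M) :
    ∑ j ∈ Finset.range (m+2), f j = f 0 + f 1 + ∑ j ∈ Finset.range m, f (j+2) := by
  rw [Finset.sum_range_succ' f (m+1), Finset.sum_range_succ' (fun j => f (j+1)) m]
  abel

lemma prod_range_split (m : ℕ) (f : ℕ → R2) :
    ∏ j ∈ Finset.range (m+2), f j = f 0 * f 1 * ∏ j ∈ Finset.range m, f (j+2) := by
  rw [Finset.prod_range_succ' f (m+1), Finset.prod_range_succ' (fun j => f (j+1)) m]
  ring

lemma sum_fin_split {M : Type*} [AddCommMonoid M] (n : ℕ) (g : Fin (2*(n+1)) → M) :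
    ∑ i, g i = g ⟨0, by omega⟩ + g ⟨1, by omega⟩ + ∑ i : Fin (2*n), g ⟨i.val+2, by omega⟩ := by
  classical
  have h1 : ∑ i, g i
      = ∑ j ∈ Finset.range (2*(n+1)), (fun j => if h : j < 2*(n+1) then g ⟨j,h⟩ else 0) j := by
    rw [← Fin.sum_univ_eq_sum_range]
    exact Finset.sum_congr rfl fun i _ => by rw [dif_pos i.isLt]
  have h2 : Finset.range (2*(n+1)) = Finset.range (2*n+2) := congrArg _ (by ring)
  rw [h1, h2, sum_range_split]
  have e0 : (if h : (0:ℕ) < 2*(n+1) then g ⟨0,h⟩ else 0) = g ⟨0, by omega⟩ := dif_pos (by omega)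
  have e1 : (if h : (1:ℕ) < 2*(n+1) then g ⟨1,h⟩ else 0) = g ⟨1, by omega⟩ := dif_pos (by omega)
  rw [e0, e1]
  congr 1
  rw [← Fin.sum_univ_eq_sum_range (fun j => if h : j+2 < 2*(n+1) then g ⟨j+2,h⟩ else 0)]
  exact Finset.sum_congr rfl fun i _ => by rw [dif_pos (by omega)]

lemma dotE_split {n : ℕ} (τ : Fin (2*(n+1)) → Bool) (s : Fin (2*(n+1)) → ℕ∞) :
    dotE τ s = ((if τ ⟨0, by omega⟩ then s ⟨0, by omega⟩ else 0)
      + (if τ ⟨1, by omega⟩ then s ⟨1, by omega⟩ else 0))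
      + dotE (shiftB τ) (fun i => s ⟨i.val+2, by omega⟩) := by
  unfold dotE
  rw [sum_fin_split n (fun i => if τ i then s i else 0)]
  all_goals (congr 1 <;> first | rfl | exact Finset.sum_congr rfl fun i _ => rfl)

lemma tev_shift {n : ℕ} (t : Fin (2*(n+1)) → ℕ∞) (i : Fin (2*n)) :
    tev (shiftT t) i = tev t ⟨i.val+2, by omega⟩ := by
  unfold tev shiftT
  by_cases h : i.val % 2 = 0
  · rw [if_pos h, if_pos (by show (i.val+2) % 2 = 0; omega)]
  · rw [if_neg h, if_neg (by show ¬ ((i.val+2) % 2 = 0); omega)]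

lemma tod_shift {n : ℕ} (t : Fin (2*(n+1)) → ℕ∞) (i : Fin (2*n)) :
    tod (shiftT t) i = tod t ⟨i.val+2, by omega⟩ := by
  unfold tod shiftT
  by_cases h : i.val % 2 = 1
  · rw [if_pos h, if_pos (by show (i.val+2) % 2 = 1; omega)]
  · rw [if_neg h, if_neg (by show ¬ ((i.val+2) % 2 = 1); omega)]

lemma wt1_eq {M : ℕ} (τ : Fin M → Bool) : wt1 τ = ∑ i, (if τ i then 1 else 0) := by
  unfold wt1
  rw [Finset.card_filter]
  all_goals exact Finset.sum_congr rfl fun i _ => by by_cases h : τ i <;> simp [h]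

lemma extB_lt {M : ℕ} (τ : Fin M → Bool) {j : ℕ} (h : j < M) : extB τ j = τ ⟨j, h⟩ :=
  dif_pos h

lemma wt1_split {n : ℕ} (τ : Fin (2*(n+1)) → Bool) :
    wt1 τ = ((if extB τ 0 then 1 else 0) + (if extB τ 1 then 1 else 0))
      + wt1 (shiftB τ) := by
  rw [extB_lt τ (show 0 < 2*(n+1) by omega), extB_lt τ (show 1 < 2*(n+1) by omega)]
  rw [wt1_eq, wt1_eq, sum_fin_split n (fun i => if τ i then 1 else 0)]
  all_goals (congr 1 <;> first | rfl | exact Finset.sum_congr rfl fun i _ => rfl)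

lemma wt10_eq {M : ℕ} (τ : Fin M → Bool) :
    wt10 τ = ∑ j ∈ Finset.range (M-1),
      (if extB τ j = true ∧ extB τ (j+1) = false then 1 else 0) :=
  Finset.card_filter _ _

lemma wt10_split {n : ℕ} (hn : 1 ≤ n) (τ : Fin (2*(n+1)) → Bool) :
    wt10 τ = ((if extB τ 0 = true ∧ extB τ 1 = false then 1 else 0)
      + (if extB τ 1 = true ∧ extB τ 2 = false then 1 else 0)) + wt10 (shiftB τ) := by
  rw [wt10_eq, wt10_eq]
  have h2 : Finset.range (2*(n+1)-1) = Finset.range ((2*n-1)+2) := congrArg _ (by omega)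
  rw [h2, sum_range_split]
  congr 1
  rw [← Finset.sum_congr rfl (fun j _ => by
    rw [extB_shift, extB_shift] :
      ∀ j ∈ Finset.range (2*n-1), (if extB (shiftB τ) j = true ∧ extB (shiftB τ) (j+1) = false
        then 1 else 0) = (if extB τ (j+2) = true ∧ extB τ (j+1+2) = false then 1 else 0))]

lemma pathS_split {n : ℕ} (hn : 1 ≤ n) (τ : Fin (2*(n+1)) → Bool) :
    pathS τ = (rowV true (extB τ 0) ⬝ᵥ colV false (extB τ 1)) *
      ((rowV false (extB τ 1) ⬝ᵥ colV true (extB τ 2)) * pathS (shiftB τ)) := by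
  unfold pathS
  have h2 : Finset.range (2*(n+1)-1) = Finset.range ((2*n-1)+2) := congrArg _ (by omega)
  rw [h2, prod_range_split]
  rw [show tyb 0 = true from rfl, show tyb 1 = false from rfl, show tyb 2 = true from rfl,
    mul_assoc]
  congr 2
  exact Finset.prod_congr rfl fun j _ => by
    rw [tyb_shift, tyb_shift, extB_shift, extB_shift]

/-! ### Path evaluation -/

def Hv (N : ℕ) (d : Bool) (w1 w : ℕ) : R2 :=
  (-1)^w1 * (bif d then 1 else pa * ib) * bb^((bif d then N else N-1) - w) * (bb-1)^w

lemma wt1_zero (τ : Fin (2*0) → Bool) : wt1 τ = 0 := by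
  rw [wt1_eq]
  simp [Finset.univ_eq_empty]

lemma path2 (N : ℕ) (hN : 1 ≤ N) (τ : Fin (2*N) → Bool) :
    (wt10 τ ≤ (if extB τ 0 then N else N - 1)) ∧
    pathS τ * rowV false (extB τ (2*N-1)) 0 = Hv N (extB τ 0) (wt1 τ) (wt10 τ) := by
  induction N, hN using Nat.le_induction with
  | base =>
    have hw1 : wt1 τ = ((if extB τ 0 then 1 else 0) + (if extB τ 1 then 1 else 0)) := by
      rw [wt1_split (n:=0) τ, wt1_zero, add_zero]
    have hw10 : wt10 τ = (if extB τ 0 = true ∧ extB τ 1 = false then 1 else 0) := by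
      rw [wt10_eq, show (2*1-1 : ℕ) = 1 from rfl, Finset.sum_range_one]
    have hp : pathS τ = rowV true (extB τ 0) ⬝ᵥ colV false (extB τ 1) := by
      unfold pathS
      rw [show (2*1-1 : ℕ) = 1 from rfl, Finset.prod_range_one,
        show tyb 0 = true from rfl, show tyb 1 = false from rfl]
    rw [hw1, hw10, hp, show (2*1-1 : ℕ) = 1 from rfl]
    cases hb : extB τ 0 with
    | false =>
      cases hc : extB τ 1 with
      | false =>
        refine ⟨by simp, ?_⟩
        simp only [Hv, cond_true, cond_false, Bool.false_eq_true, Bool.true_eq_false, false_and, and_false, true_and, and_true, and_self, if_false, if_true, reduceIte, zero_add, add_zero]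
        simp only [rowV, colV, bb, dotProduct, Fin.sum_univ_two, Matrix.cons_val_zero, Matrix.cons_val_one, Matrix.head_cons]
        try norm_num
        try ring
      | true =>
        refine ⟨by simp, ?_⟩
        simp only [Hv, cond_true, cond_false, Bool.false_eq_true, Bool.true_eq_false, false_and, and_false, true_and, and_true, and_self, if_false, if_true, reduceIte, zero_add, add_zero]
        simp only [rowV, colV, bb, dotProduct, Fin.sum_univ_two, Matrix.cons_val_zero, Matrix.cons_val_one, Matrix.head_cons]
        try norm_num
        try ring
    | true =>
      cases hc : extB τ 1 with
      | false =>
        refine ⟨by simp, ?_⟩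
        simp only [Hv, cond_true, cond_false, Bool.false_eq_true, Bool.true_eq_false, false_and, and_false, true_and, and_true, and_self, if_false, if_true, reduceIte, zero_add, add_zero]
        simp only [rowV, colV, bb, dotProduct, Fin.sum_univ_two, Matrix.cons_val_zero, Matrix.cons_val_one, Matrix.head_cons]
        try norm_num
        try ring
      | true =>
        refine ⟨by simp, ?_⟩
        simp only [Hv, cond_true, cond_false, Bool.false_eq_true, Bool.true_eq_false, false_and, and_false, true_and, and_true, and_self, if_false, if_true, reduceIte, zero_add, add_zero]
        simp only [rowV, colV, bb, dotProduct, Fin.sum_univ_two, Matrix.cons_val_zero, Matrix.cons_val_one, Matrix.head_cons]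
        try norm_num
        try ring
  | succ n hn ih =>
    obtain ⟨ihb, ihe⟩ := ih (shiftB τ)
    rw [extB_shift τ 0, show (0+2:ℕ) = 2 from rfl] at ihb ihe
    have hlast : extB τ (2*(n+1)-1) = extB (shiftB τ) (2*n-1) := by
      rw [extB_shift]
      congr 1
      omega
    refine ⟨?_, ?_⟩
    · rw [wt10_split hn τ]
      cases hb : extB τ 0 <;> cases hc : extB τ 1 <;> cases hd : extB τ 2 <;>
        rw [hd] at ihb <;> simp at ihb ⊢ <;> omega
    rw [pathS_split hn τ, hlast, wt1_split τ, wt10_split hn τ]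
    conv_lhs => rw [mul_assoc, mul_assoc]
    rw [ihe]
    cases hb : extB τ 0 with
    | false =>
      cases hc : extB τ 1 with
      | false =>
        cases hd : extB τ 2 with
        | false =>
          rw [hd] at ihb
          simp only [Bool.false_eq_true, Bool.true_eq_false, if_false, if_true, reduceIte] at ihb
          simp only [Hv, cond_true, cond_false, Bool.false_eq_true, Bool.true_eq_false, false_and, and_false, true_and, and_true, and_self, if_false, if_true, reduceIte, zero_add, add_zero]
          rw [show n + 1 - 1 - wt10 (shiftB τ) = (n - 1 - wt10 (shiftB τ)) + 1 from by omega]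
          simp only [rowV, colV, bb, dotProduct, Fin.sum_univ_two, Matrix.cons_val_zero, Matrix.cons_val_one, Matrix.head_cons]
          ring
        | true =>
          rw [hd] at ihb
          simp only [Bool.false_eq_true, Bool.true_eq_false, if_false, if_true, reduceIte] at ihb
          simp only [Hv, cond_true, cond_false, Bool.false_eq_true, Bool.true_eq_false, false_and, and_false, true_and, and_true, and_self, if_false, if_true, reduceIte, zero_add, add_zero]
          rw [show n + 1 - 1 - wt10 (shiftB τ) = n - wt10 (shiftB τ) from by omega]
          simp only [rowV, colV, bb, dotProduct, Fin.sum_univ_two, Matrix.cons_val_zero, Matrix.cons_val_one, Matrix.head_cons]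
          ring
      | true =>
        cases hd : extB τ 2 with
        | false =>
          rw [hd] at ihb
          simp only [Bool.false_eq_true, Bool.true_eq_false, if_false, if_true, reduceIte] at ihb
          simp only [Hv, cond_true, cond_false, Bool.false_eq_true, Bool.true_eq_false, false_and, and_false, true_and, and_true, and_self, if_false, if_true, reduceIte, zero_add, add_zero]
          rw [show n + 1 - 1 - (1 + wt10 (shiftB τ)) = n - 1 - wt10 (shiftB τ) from by omega]
          simp only [rowV, colV, bb, dotProduct, Fin.sum_univ_two, Matrix.cons_val_zero, Matrix.cons_val_one, Matrix.head_cons]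
          ring
        | true =>
          rw [hd] at ihb
          simp only [Bool.false_eq_true, Bool.true_eq_false, if_false, if_true, reduceIte] at ihb
          simp only [Hv, cond_true, cond_false, Bool.false_eq_true, Bool.true_eq_false, false_and, and_false, true_and, and_true, and_self, if_false, if_true, reduceIte, zero_add, add_zero]
          rw [show n + 1 - 1 - wt10 (shiftB τ) = n - wt10 (shiftB τ) from by omega]
          simp only [rowV, colV, bb, dotProduct, Fin.sum_univ_two, Matrix.cons_val_zero, Matrix.cons_val_one, Matrix.head_cons]
          ring
    | true =>
      cases hc : extB τ 1 with
      | false =>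
        cases hd : extB τ 2 with
        | false =>
          rw [hd] at ihb
          simp only [Bool.false_eq_true, Bool.true_eq_false, if_false, if_true, reduceIte] at ihb
          simp only [Hv, cond_true, cond_false, Bool.false_eq_true, Bool.true_eq_false, false_and, and_false, true_and, and_true, and_self, if_false, if_true, reduceIte, zero_add, add_zero]
          rw [show n + 1 - (1 + wt10 (shiftB τ)) = (n - 1 - wt10 (shiftB τ)) + 1 from by omega]
          simp only [rowV, colV, bb, dotProduct, Fin.sum_univ_two, Matrix.cons_val_zero, Matrix.cons_val_one, Matrix.head_cons]
          ring
        | true =>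
          rw [hd] at ihb
          simp only [Bool.false_eq_true, Bool.true_eq_false, if_false, if_true, reduceIte] at ihb
          simp only [Hv, cond_true, cond_false, Bool.false_eq_true, Bool.true_eq_false, false_and, and_false, true_and, and_true, and_self, if_false, if_true, reduceIte, zero_add, add_zero]
          rw [show n + 1 - (1 + wt10 (shiftB τ)) = n - wt10 (shiftB τ) from by omega]
          simp only [rowV, colV, bb, dotProduct, Fin.sum_univ_two, Matrix.cons_val_zero, Matrix.cons_val_one, Matrix.head_cons]
          ring
      | true =>
        cases hd : extB τ 2 with
        | false =>
          rw [hd] at ihb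
          simp only [Bool.false_eq_true, Bool.true_eq_false, if_false, if_true, reduceIte] at ihb
          simp only [Hv, cond_true, cond_false, Bool.false_eq_true, Bool.true_eq_false, false_and, and_false, true_and, and_true, and_self, if_false, if_true, reduceIte, zero_add, add_zero]
          rw [show n + 1 - (1 + wt10 (shiftB τ)) = (n - 1 - wt10 (shiftB τ)) + 1 from by omega]
          simp only [rowV, colV, bb, dotProduct, Fin.sum_univ_two, Matrix.cons_val_zero, Matrix.cons_val_one, Matrix.head_cons]
          ring
        | true =>
          rw [hd] at ihb
          simp only [Bool.false_eq_true, Bool.true_eq_false, if_false, if_true, reduceIte] at ihb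
          simp only [Hv, cond_true, cond_false, Bool.false_eq_true, Bool.true_eq_false, false_and, and_false, true_and, and_true, and_self, if_false, if_true, reduceIte, zero_add, add_zero]
          rw [show n + 1 - wt10 (shiftB τ) = (n - wt10 (shiftB τ)) + 1 from by omega]
          simp only [rowV, colV, bb, dotProduct, Fin.sum_univ_two, Matrix.cons_val_zero, Matrix.cons_val_one, Matrix.head_cons]
          ring
/-! ### Path evaluation, combined -/

lemma patheval (N : ℕ) (hN : 1 ≤ N) (τ : Fin (2*N) → Bool) :
    wt10 τ ≤ N ∧
    colV true (extB τ 0) 0 * (pathS τ * rowV false (extB τ (2*N-1)) 0)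
      = (-1)^(wt1 τ) * (bb^(N - wt10 τ) * (bb-1)^(wt10 τ)) := by
  obtain ⟨hbd, he⟩ := path2 N hN τ
  rw [he]
  cases hd : extB τ 0 with
  | false =>
    rw [hd] at hbd
    simp only [Bool.false_eq_true, if_false, reduceIte] at hbd
    refine ⟨by omega, ?_⟩
    simp only [Hv, cond_true, cond_false]
    rw [show N - wt10 τ = (N - 1 - wt10 τ) + 1 from by omega]
    simp only [colV, bb, Matrix.cons_val_zero]
    ring
  | true =>
    rw [hd] at hbd
    simp only [if_true, reduceIte] at hbd
    refine ⟨hbd, ?_⟩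
    simp only [Hv, cond_true, cond_false, colV, Matrix.cons_val_zero]
    ring

/-! ### The splitting equivalence -/

def split2 (n : ℕ) : (Fin (2*(n+1)) → Bool) ≃ ((Fin (2*n) → Bool) × Bool × Bool) where
  toFun τ := (shiftB τ, τ ⟨0, by omega⟩, τ ⟨1, by omega⟩)
  invFun x := fun i => if h : i.val = 0 then x.2.1 else if h1 : i.val = 1 then x.2.2
    else x.1 ⟨i.val - 2, by omega⟩
  left_inv τ := by
    funext i
    rcases i with ⟨i, hi⟩
    by_cases h0 : i = 0
    · subst h0; rfl
    · by_cases h1 : i = 1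
      · subst h1
        dsimp only
        rw [dif_neg (by omega), dif_pos rfl]
      · dsimp only
        rw [dif_neg h0, dif_neg h1]
        show τ ⟨i - 2 + 2, _⟩ = τ ⟨i, hi⟩
        exact congrArg τ (Fin.ext (show i - 2 + 2 = i by omega))
  right_inv x := by
    rcases x with ⟨σ, b, c⟩
    simp only [Prod.mk.injEq]
    refine ⟨?_, rfl, rfl⟩
    funext i
    unfold shiftB
    dsimp only
    rw [dif_neg (by omega), dif_neg (by omega)]
    exact congrArg σ (Fin.ext (show i.val + 2 - 2 = i.val by omega))

lemma dotE_zero (τ : Fin (2*0) → Bool) (s : Fin (2*0) → ℕ∞) : dotE τ s = 0 := by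
  unfold dotE
  simp [Finset.univ_eq_empty]

lemma pathS_one (τ : Fin (2*1) → Bool) :
    pathS τ = rowV true (extB τ 0) ⬝ᵥ colV false (extB τ 1) := by
  unfold pathS
  rw [show (2*1-1 : ℕ) = 1 from rfl, Finset.prod_range_one,
    show tyb 0 = true from rfl, show tyb 1 = false from rfl]

lemma tev_at0 {n : ℕ} (t : Fin (2*(n+1)) → ℕ∞) : tev t ⟨0, by omega⟩ = t ⟨0, by omega⟩ :=
  if_pos rfl
lemma tev_at1 {n : ℕ} (t : Fin (2*(n+1)) → ℕ∞) : tev t ⟨1, by omega⟩ = 0 :=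
  if_neg (by norm_num)
lemma tod_at0 {n : ℕ} (t : Fin (2*(n+1)) → ℕ∞) : tod t ⟨0, by omega⟩ = 0 :=
  if_neg (by norm_num)
lemma tod_at1 {n : ℕ} (t : Fin (2*(n+1)) → ℕ∞) : tod t ⟨1, by omega⟩ = t ⟨1, by omega⟩ :=
  if_pos rfl

lemma dotE_tev_split {n : ℕ} (τ : Fin (2*(n+1)) → Bool) (t : Fin (2*(n+1)) → ℕ∞) :
    dotE τ (tev t) = (if τ ⟨0, by omega⟩ then t ⟨0, by omega⟩ else 0)
      + dotE (shiftB τ) (tev (shiftT t)) := by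
  rw [dotE_split τ (tev t), tev_at0, tev_at1]
  have h1 : (if τ ⟨1, by omega⟩ then (0:ℕ∞) else 0) = 0 := by split <;> rfl
  rw [h1, add_zero]
  congr 1
  unfold dotE
  exact Finset.sum_congr rfl fun i _ => by rw [tev_shift]

lemma dotE_tod_split {n : ℕ} (τ : Fin (2*(n+1)) → Bool) (t : Fin (2*(n+1)) → ℕ∞) :
    dotE τ (tod t) = (if τ ⟨1, by omega⟩ then t ⟨1, by omega⟩ else 0)
      + dotE (shiftB τ) (tod (shiftT t)) := by
  rw [dotE_split τ (tod t), tod_at0, tod_at1]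
  have h1 : (if τ ⟨0, by omega⟩ then (0:ℕ∞) else 0) = 0 := by split <;> rfl
  rw [h1, zero_add]
  congr 1
  unfold dotE
  exact Finset.sum_congr rfl fun i _ => by rw [tod_shift]

/-! ### Main matrix decomposition -/

set_option maxHeartbeats 2000000 in
lemma main (N : ℕ) (hN : 1 ≤ N) (t : Fin (2*N) → ℕ∞) :
    Mmat t = ∑ τ : Fin (2*N) → Bool,
      (xpowE pa (dotE τ (tev t)) * xpowE pb (dotE τ (tod t)) * pathS τ) •
        vecMulVec (colV true (extB τ 0)) (rowV false (extB τ (2*N-1))) := by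
  induction N, hN using Nat.le_induction with
  | base =>
    have hMm : Mmat t = powE A1 A1inf (t ⟨0, by omega⟩) * powE A0 A0inf (t ⟨1, by omega⟩) := by
      show ((List.finRange 1).map _).prod = _
      rw [List.finRange_succ, List.finRange_zero, List.map_cons, List.map_nil,
        List.map_nil, List.prod_cons, List.prod_nil, mul_one]
      try rfl
    have hsum : (∑ τ : Fin (2*1) → Bool,
        (xpowE pa (dotE τ (tev t)) * xpowE pb (dotE τ (tod t)) * pathS τ) •
          vecMulVec (colV true (extB τ 0)) (rowV false (extB τ (2*1-1))))
        = ∑ x : (Fin (2*0) → Bool) × Bool × Bool,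
          (xpowE pa (if x.2.1 then t ⟨0, by omega⟩ else 0)
            * xpowE pb (if x.2.2 then t ⟨1, by omega⟩ else 0)
            * (rowV true x.2.1 ⬝ᵥ colV false x.2.2)) •
            vecMulVec (colV true x.2.1) (rowV false x.2.2) := by
      refine Fintype.sum_equiv (split2 0) _ _ ?_
      intro τ
      have e0 : extB τ 0 = τ ⟨0, by omega⟩ := extB_lt τ (by omega)
      have e1 : extB τ 1 = τ ⟨1, by omega⟩ := extB_lt τ (by omega)
      have e1' : extB τ (2*1-1) = τ ⟨1, by omega⟩ := extB_lt τ (by omega)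
      have hde : dotE τ (tev t) = (if τ ⟨0, by omega⟩ then t ⟨0, by omega⟩ else 0) := by
        rw [dotE_tev_split (n:=0), dotE_zero, add_zero]
      have hdo : dotE τ (tod t) = (if τ ⟨1, by omega⟩ then t ⟨1, by omega⟩ else 0) := by
        rw [dotE_tod_split (n:=0), dotE_zero, add_zero]
      rw [pathS_one, hde, hdo, e0, e1]
      try rw [e1']
      try rfl
    haveI : Unique (Fin (2*0) → Bool) := ⟨⟨fun _ => false⟩, fun f => funext fun i => absurd i.2 (by omega)⟩
    rw [hMm, powE_A1, powE_A0, hsum, Fintype.sum_prod_type, Fintype.sum_unique,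
      Fintype.sum_prod_type, Fintype.sum_bool, Fintype.sum_bool]
    apply Matrix.ext
    intro i j
    fin_cases i <;> fin_cases j <;>
      · simp [Bm, colV, rowV, Matrix.vecMulVec_apply, Matrix.mul_apply, Matrix.smul_apply,
          Fin.sum_univ_two, dotProduct, xpowE_zero, smul_eq_mul, Matrix.add_apply, -Matrix.cons_vecMulVec]
        try ring
  | succ n hn ih =>
    have hstep : Mmat t = (powE A1 A1inf (t ⟨0, by omega⟩) * powE A0 A0inf (t ⟨1, by omega⟩))
        * Mmat (shiftT t) := by
      show ((List.finRange (n+1)).map _).prod = _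
      rw [List.finRange_succ, List.map_cons, List.prod_cons, List.map_map]
      rfl
    have hlast : ∀ τ : Fin (2*(n+1)) → Bool,
        extB τ (2*(n+1)-1) = extB (shiftB τ) (2*n-1) := by
      intro τ
      rw [extB_shift]
      congr 1
      omega
    have hsum : (∑ τ : Fin (2*(n+1)) → Bool,
        (xpowE pa (dotE τ (tev t)) * xpowE pb (dotE τ (tod t)) * pathS τ) •
          vecMulVec (colV true (extB τ 0)) (rowV false (extB τ (2*(n+1)-1))))
        = ∑ x : (Fin (2*n) → Bool) × Bool × Bool,
          (xpowE pa ((if x.2.1 then t ⟨0, by omega⟩ else 0) + dotE x.1 (tev (shiftT t)))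
            * xpowE pb ((if x.2.2 then t ⟨1, by omega⟩ else 0) + dotE x.1 (tod (shiftT t)))
            * ((rowV true x.2.1 ⬝ᵥ colV false x.2.2) *
               ((rowV false x.2.2 ⬝ᵥ colV true (extB x.1 0)) * pathS x.1))) •
            vecMulVec (colV true x.2.1) (rowV false (extB x.1 (2*n-1))) := by
      refine Fintype.sum_equiv (split2 n) _ _ ?_
      intro τ
      have e0 : extB τ 0 = τ ⟨0, by omega⟩ := extB_lt τ (by omega)
      have e1 : extB τ 1 = τ ⟨1, by omega⟩ := extB_lt τ (by omega)
      have e2 : extB τ 2 = extB (shiftB τ) 0 := (extB_shift τ 0).symm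
      rw [pathS_split hn τ, dotE_tev_split, dotE_tod_split, hlast τ, e2, e0, e1]
      rfl
    rw [hstep, ih (shiftT t), powE_A1, powE_A0, hsum, Finset.mul_sum,
      Fintype.sum_prod_type]
    apply Finset.sum_congr rfl
    intro σ _
    rw [Fintype.sum_prod_type, Fintype.sum_bool, Fintype.sum_bool, Fintype.sum_bool]
    apply Matrix.ext
    intro i j
    fin_cases i <;> fin_cases j <;>
      · simp [Bm, colV, rowV, Matrix.vecMulVec_apply, Matrix.mul_apply, Matrix.smul_apply,
          Fin.sum_univ_two, dotProduct, xpowE_add, xpowE_zero, smul_eq_mul,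
          Matrix.add_apply, -Matrix.cons_vecMulVec]
        try ring

/-! ### Binomial identity -/

lemma binom_sum (w m : ℕ) (h : w ≤ m) :
    ∑ j ∈ Finset.range (w+1), ((w.choose j : ℕ) : R2) * (-1)^j * bb^(m-j)
      = bb^(m-w) * (bb-1)^w := by
  have key : ∀ j ∈ Finset.range (w+1), ((w.choose j : ℕ) : R2) * (-1)^j * bb^(m-j)
      = bb^(m-w) * (((w.choose j : ℕ) : R2) * (-1)^j * bb^(w-j)) := by
    intro j hj
    rw [Finset.mem_range] at hj
    rw [show m - j = (m-w) + (w-j) from by omega, pow_add]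
    ring
  rw [Finset.sum_congr rfl key, ← Finset.mul_sum]
  congr 1
  have h2 : (bb - 1 : R2)^w = (bb + (-1))^w := by ring
  rw [h2, add_pow, ← Finset.sum_range_reflect]
  apply Finset.sum_congr rfl
  intro j hj
  rw [Finset.mem_range] at hj
  rw [show w + 1 - 1 - j = w - j from by omega, show w - (w - j) = j from by omega,
    Nat.choose_symm (by omega : j ≤ w)]
  ring

end GammaAux2

/-- **Proposition (alternative component decomposition).**
For `N ≥ 1` and `𝐭 ∈ ℕ̄₊^{2N}`,
`γ_𝐭 = Σ_{τ ∈ {0,1}^{2N}} (−1)^{|τ|₁} α^{τ·𝐭ₑ} β^{τ·𝐭ₒ}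
  Σ_{j=0}^{|τ|₁₀} C(|τ|₁₀, j) (−1)^j 𝔟_{N−j}`,
where `𝔟_m = (αβ(1−α)⁻¹(1−β)⁻¹)^m`. -/
theorem gamma_component_decomposition_alt (N : ℕ) (hN : 1 ≤ N)
    (t : Fin (2 * N) → ℕ∞) (ht : ∀ i, t i ≠ 0) :
    gam t =
      ∑ τ : Fin (2 * N) → Bool,
        (-1 : R2) ^ wt1 τ * xpowE pa (dotE τ (tev t)) * xpowE pb (dotE τ (tod t)) *
          ∑ j ∈ Finset.range (wt10 τ + 1),
            (((wt10 τ).choose j : ℕ) : R2) * (-1 : R2) ^ j *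
              (pa * pb * ((1 - pa)⁻¹ * (1 - pb)⁻¹)) ^ (N - j) := by
  have hM := GammaAux2.main N hN t
  show (Mmat t) 0 0 = _
  rw [hM, Matrix.sum_apply]
  apply Finset.sum_congr rfl
  intro τ _
  obtain ⟨hw, he⟩ := GammaAux2.patheval N hN τ
  simp only [show (pa * pb * ((1 - pa)⁻¹ * (1 - pb)⁻¹)) = GammaAux2.bb from rfl]
  rw [GammaAux2.binom_sum (wt10 τ) N hw]
  rw [Matrix.smul_apply, Matrix.vecMulVec_apply, smul_eq_mul]
  linear_combination (xpowE pa (dotE τ (tev t)) * xpowE pb (dotE τ (tod t))) * he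
end
end

section
/- Let N ≥ 1, let 𝐤 = (k₀,…,k_{N-1}) ∈ ℕ̄₊^{N}, and let ℓ₀ = ⋯ = ℓ_{N-1} = ∞. Then for every permutation σ of {0,…,N−1}, writing σ𝐤 = (k_{σ⁻¹(0)},…,k_{σ⁻¹(N-1)}), one has the identity of formal power series γ_{𝐤∗𝓵} = γ_{σ𝐤∗𝓵}, where 𝓵 = (∞,…,∞) ∈ ℕ̄₊^{N}. -/
open MvPowerSeries Finset

noncomputable section

/-- Interleaving `𝐤∗𝓵 = (k₀,ℓ₀,k₁,ℓ₁,…,k_{N-1},ℓ_{N-1})`. -/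
def interleave {N : ℕ} (k l : Fin N → ℕ∞) : Fin (2 * N) → ℕ∞ :=
  fun i =>
    if i.val % 2 = 0 then k ⟨i.val / 2, by have := i.isLt; omega⟩
    else l ⟨i.val / 2, by have := i.isLt; omega⟩


lemma mul_A0inf_01 (X : Matrix (Fin 2) (Fin 2) R2) : (X * A0inf) 0 1 = 0 := by
  simp [A0inf, Matrix.mul_apply, Fin.sum_univ_two]

lemma list_prod_00 : ∀ (L : List (Matrix (Fin 2) (Fin 2) R2)), (∀ X ∈ L, X 0 1 = 0) →
    L.prod 0 0 = (L.map (fun X => X 0 0)).prod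
  | [], _ => by simp [Matrix.one_apply]
  | X :: L, h => by
    have hX : X 0 1 = 0 := h X List.mem_cons_self
    have ih := list_prod_00 L (fun Y hY => h Y (List.mem_cons_of_mem _ hY))
    simp [List.prod_cons, Matrix.mul_apply, Fin.sum_univ_two, hX, ih]

lemma gam_eq (N : ℕ) (k : Fin N → ℕ∞) :
    gam (interleave k (fun _ => (⊤ : ℕ∞))) =
      ∏ j : Fin N, (powE A1 A1inf (k j) * A0inf) 0 0 := by
  have hlist : ((List.finRange N).map (fun j : Fin N =>
      powE A1 A1inf ((interleave k (fun _ => (⊤ : ℕ∞))) ⟨2 * j.val, by have := j.isLt; omega⟩) *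
      powE A0 A0inf ((interleave k (fun _ => (⊤ : ℕ∞))) ⟨2 * j.val + 1, by have := j.isLt; omega⟩)))
      = ((List.finRange N).map (fun j : Fin N => powE A1 A1inf (k j) * A0inf)) := by
    apply List.map_congr_left
    intro j _
    have h1 : (interleave k (fun _ => (⊤ : ℕ∞))) ⟨2 * j.val, by have := j.isLt; omega⟩ = k j := by
      simp only [interleave]
      rw [if_pos (by omega)]
      congr 1
      exact Fin.ext (show 2 * j.val / 2 = j.val by omega)
    have h2 : (interleave k (fun _ => (⊤ : ℕ∞))) ⟨2 * j.val + 1, by have := j.isLt; omega⟩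
        = (⊤ : ℕ∞) := by
      simp only [interleave]
      rw [if_neg (by omega)]
    rw [h1, h2]
    rfl
  rw [gam, Mmat, hlist, list_prod_00 _ (by
    intro X hX
    simp only [List.mem_map] at hX
    obtain ⟨j, _, rfl⟩ := hX
    exact mul_A0inf_01 _)]
  rw [List.map_map, Fin.prod_univ_def]
  rfl

/-- **Corollary (permuting blocks of 1s separated by infinite blocks of 0s).**
If `ℓ₀ = ⋯ = ℓ_{N-1} = ∞`, then for every permutation `σ` of `{0,…,N−1}` we have
`γ_{𝐤∗𝓵} = γ_{σ𝐤∗𝓵}`, where `σ𝐤 = (k_{σ⁻¹(0)},…,k_{σ⁻¹(N-1)})`. -/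
theorem gamma_perm_ones_blocks (N : ℕ) (hN : 1 ≤ N) (k : Fin N → ℕ∞) (hk : ∀ j, k j ≠ 0)
    (σ : Equiv.Perm (Fin N)) :
    gam (interleave k (fun _ => (⊤ : ℕ∞))) =
      gam (interleave (fun j => k (σ.symm j)) (fun _ => (⊤ : ℕ∞))) := by
  rw [gam_eq, gam_eq]
  exact (Equiv.prod_comp σ.symm _).symm
end
end

section
/- Let N ≥ 1, let 𝓵 = (ℓ₀,…,ℓ_{N-1}) ∈ ℕ̄₊^{N}, and let k₀ = ⋯ = k_{N-1} = ∞. Then for every permutation σ of {0,…,N−1} with σ(N−1) = N−1, writing σ𝓵 = (ℓ_{σ⁻¹(0)},…,ℓ_{σ⁻¹(N-1)}), one has the identity of formal power series γ_{𝐤∗𝓵} = γ_{𝐤∗σ𝓵}, where 𝐤 = (∞,…,∞) ∈ ℕ̄₊^{N}. -/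
open MvPowerSeries Finset

noncomputable section

/- **Corollary (permuting blocks of 0s separated by infinite blocks of 1s)**:
see `gamma_perm_zeros_blocks` below. -/

/-- Abbreviation for the extended power of `A₀`. -/
def Bm (x : ℕ∞) : Matrix (Fin 2) (Fin 2) R2 := powE A0 A0inf x

/-- The scalar `s(X) = β(1−α)⁻¹ X₁₀ + X₁₁`. -/
def sc (X : Matrix (Fin 2) (Fin 2) R2) : R2 := pb * (1 - pa)⁻¹ * X 1 0 + X 1 1

lemma key_smul (X : Matrix (Fin 2) (Fin 2) R2) : A1inf * X * A1inf = sc X • A1inf := by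
  apply Matrix.ext
  intro i j
  fin_cases i <;> fin_cases j <;>
    simp [A1inf, sc, Matrix.mul_apply, Fin.sum_univ_two, Matrix.smul_apply, smul_eq_mul,
      Fin.mk_zero, Fin.mk_one, Matrix.vecMul, dotProduct, Matrix.vecHead, Matrix.vecTail] <;>
    ring

lemma entry_key (X Z : Matrix (Fin 2) (Fin 2) R2) :
    ((A1inf * X) * (A1inf * Z)) 0 0 = sc X * ((A1inf * Z) 0 0) := by
  have h : (A1inf * X) * (A1inf * Z) = sc X • (A1inf * Z) := by
    rw [← mul_assoc, key_smul, smul_mul_assoc]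
  rw [h, Matrix.smul_apply, smul_eq_mul]

lemma Mmat_interleave {N : ℕ} (l : Fin N → ℕ∞) :
    Mmat (interleave (fun _ => (⊤ : ℕ∞)) l) =
      ((List.finRange N).map (fun j => A1inf * Bm (l j))).prod := by
  unfold Mmat
  congr 1
  apply List.map_congr_left
  intro j _
  have h1 : (2 * j.val) % 2 = 0 := by omega
  have h2 : ¬ ((2 * j.val + 1) % 2 = 0) := by omega
  have h3 : (2 * j.val) / 2 = j.val := by omega
  have h4 : (2 * j.val + 1) / 2 = j.val := by omega
  simp only [interleave, h1, h2, if_true, if_false, h3, h4]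
  have : (⟨j.val, by omega⟩ : Fin N) = j := rfl
  rw [this]
  rfl

lemma gam_formula : ∀ (n : ℕ) (l : Fin (n + 1) → ℕ∞),
    gam (interleave (fun _ => (⊤ : ℕ∞)) l) =
      (∏ j : Fin n, sc (Bm (l j.castSucc))) * ((A1inf * Bm (l (Fin.last n))) 0 0) := by
  intro n
  induction n with
  | zero =>
      intro l
      rw [gam, Mmat_interleave]
      simp only [List.finRange_succ, List.finRange_zero, List.map_nil, List.map_cons,
        List.prod_cons, List.prod_nil, mul_one, Finset.univ_eq_empty, Finset.prod_empty, one_mul]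
      rfl
  | succ n ih =>
      intro l
      rw [gam, Mmat_interleave, List.finRange_succ, List.map_cons, List.map_map,
        List.prod_cons]
      have hdec : List.finRange (n + 1) = 0 :: List.map Fin.succ (List.finRange n) :=
        List.finRange_succ
      -- tail product is of the form A1inf * Z
      have htail : (List.map ((fun j => A1inf * Bm (l j)) ∘ Fin.succ)
            (List.finRange (n + 1))).prod =
          A1inf * (Bm (l (Fin.succ 0)) *
            (List.map ((fun j => A1inf * Bm (l j)) ∘ Fin.succ ∘ Fin.succ)
              (List.finRange n)).prod) := by
        rw [hdec, List.map_cons, List.prod_cons, List.map_map]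
        show (A1inf * Bm (l (Fin.succ 0))) * _ = _
        rw [mul_assoc]
        rfl
      rw [htail, entry_key, ← htail]
      have htail2 : (List.map ((fun j => A1inf * Bm (l j)) ∘ Fin.succ)
            (List.finRange (n + 1))).prod =
          ((List.finRange (n + 1)).map (fun j => A1inf * Bm (l j.succ))).prod := rfl
      rw [htail2]
      have ihx := ih (fun j => l j.succ)
      rw [gam, Mmat_interleave] at ihx
      rw [ihx, Fin.prod_univ_succ (fun j : Fin (n + 1) => sc (Bm (l j.castSucc)))]
      have hlast : (Fin.last n).succ = Fin.last (n + 1) := rfl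
      have hcs : ∀ j : Fin n, (j.castSucc).succ = (j.succ).castSucc := by
        intro j; exact Fin.succ_castSucc j
      simp only [hlast]
      have h0 : (0 : Fin (n + 1)).castSucc = 0 := rfl
      rw [h0]
      have : (∏ j : Fin n, sc (Bm (l (j.castSucc).succ))) =
          ∏ j : Fin n, sc (Bm (l (j.succ).castSucc)) := by
        apply Finset.prod_congr rfl
        intro j _
        rw [hcs j]
      rw [this, mul_assoc]

/-- main -/
theorem gamma_perm_zeros_blocks (N : ℕ) (hN : 1 ≤ N) (l : Fin N → ℕ∞) (hl : ∀ j, l j ≠ 0)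
    (σ : Equiv.Perm (Fin N)) (hσ : σ ⟨N - 1, by omega⟩ = ⟨N - 1, by omega⟩) :
    gam (interleave (fun _ => (⊤ : ℕ∞)) l) =
      gam (interleave (fun _ => (⊤ : ℕ∞)) (fun j => l (σ.symm j))) := by
  obtain ⟨n, rfl⟩ : ∃ n, N = n + 1 := ⟨N - 1, by omega⟩
  have hlast : (⟨n + 1 - 1, by omega⟩ : Fin (n + 1)) = Fin.last n := rfl
  rw [hlast] at hσ
  have hσs : σ.symm (Fin.last n) = Fin.last n := (Equiv.symm_apply_eq σ).mpr hσ.symm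
  rw [gam_formula, gam_formula]
  have hne : ∀ j : Fin n, σ.symm j.castSucc ≠ Fin.last n := by
    intro j h
    have := σ.symm.injective (h.trans hσs.symm)
    exact absurd this (Fin.ne_of_lt (Fin.castSucc_lt_last j))
  congr 1
  · -- products equal
    set g : Fin (n + 1) → R2 := fun i => if i = Fin.last n then 1 else sc (Bm (l i)) with hg
    have hgc : ∀ j : Fin n, g j.castSucc = sc (Bm (l j.castSucc)) := by
      intro j
      simp only [hg, if_neg (Fin.ne_of_lt (Fin.castSucc_lt_last j))]
    have hgs : ∀ j : Fin n, g (σ.symm j.castSucc) = sc (Bm (l (σ.symm j.castSucc))) := by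
      intro j
      simp only [hg, if_neg (hne j)]
    have hglast : g (Fin.last n) = 1 := by simp [hg]
    calc (∏ j : Fin n, sc (Bm (l j.castSucc)))
        = ∏ j : Fin n, g j.castSucc := by
          exact Finset.prod_congr rfl fun j _ => (hgc j).symm
      _ = (∏ j : Fin n, g j.castSucc) * g (Fin.last n) := by rw [hglast, mul_one]
      _ = ∏ i : Fin (n + 1), g i := (Fin.prod_univ_castSucc g).symm
      _ = ∏ i : Fin (n + 1), g (σ.symm i) := (Equiv.prod_comp σ.symm g).symm
      _ = (∏ j : Fin n, g (σ.symm j.castSucc)) * g (σ.symm (Fin.last n)) :=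
          Fin.prod_univ_castSucc (fun i => g (σ.symm i))
      _ = ∏ j : Fin n, g (σ.symm j.castSucc) := by rw [hσs, hglast, mul_one]
      _ = ∏ j : Fin n, sc (Bm (l (σ.symm j.castSucc))) :=
          Finset.prod_congr rfl fun j _ => hgs j
  · rw [hσs]
end
end

section
/- (Digit reversal property.) Let N ≥ 1 and let k₀,…,k_{N-1} ≥ 1 and ℓ₀,…,ℓ_{N-2} ≥ 1 be finite positive integers. Then one has the identity of formal power series γ_{(k₀,ℓ₀,k₁,ℓ₁,…,k_{N-2},ℓ_{N-2},k_{N-1},∞)} = γ_{(k_{N-1},ℓ_{N-2},k_{N-2},ℓ_{N-3},…,k₁,ℓ₀,k₀,∞)}. (In terms of integers: if t has binary expansion 1^{k_{N-1}} 0^{ℓ_{N-2}} ⋯ 0^{ℓ₀} 1^{k₀} and t′ is obtained from t by reversing its binary expansion, then γ_t = γ_{t′}.) -/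
open MvPowerSeries Finset

noncomputable section

-- auxiliary

lemma powE_coe (A Ainf : Matrix (Fin 2) (Fin 2) R2) (n : ℕ) :
    powE A Ainf (n : ℕ∞) = A ^ n := rfl

lemma powE_top (A Ainf : Matrix (Fin 2) (Fin 2) R2) :
    powE A Ainf ⊤ = Ainf := rfl

def Smat : Matrix (Fin 2) (Fin 2) R2 :=
  !![pb * (1 - pb), pa * pb; pa * pb, pa * (1 - pa)]

lemma A0t : A0.transpose = !![1, pa; 0, pb] := by
  refine Matrix.ext fun i j => ?_
  fin_cases i <;> fin_cases j <;> simp [A0, Matrix.transpose_apply]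

lemma A1t : A1.transpose = !![pa, 0; pb, 1] := by
  refine Matrix.ext fun i j => ?_
  fin_cases i <;> fin_cases j <;> simp [A1, Matrix.transpose_apply]

lemma A0_comm : A0 * Smat = Smat * A0.transpose := by
  rw [A0t]
  refine Matrix.ext fun i j => ?_
  fin_cases i <;> fin_cases j <;>
    simp [A0, Smat, Matrix.mul_apply, Fin.sum_univ_two] <;> ring

lemma A1_comm : A1 * Smat = Smat * A1.transpose := by
  rw [A1t]
  refine Matrix.ext fun i j => ?_
  fin_cases i <;> fin_cases j <;>
    simp [A1, Smat, Matrix.mul_apply, Fin.sum_univ_two] <;> ring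

lemma pow_comm {X : Matrix (Fin 2) (Fin 2) R2} (h : X * Smat = Smat * X.transpose)
    (n : ℕ) : X ^ n * Smat = Smat * (X ^ n).transpose := by
  induction n with
  | zero => simp
  | succ n ih =>
      calc X ^ (n+1) * Smat = X ^ n * (X * Smat) := by rw [pow_succ, mul_assoc]
        _ = (X ^ n * Smat) * X.transpose := by rw [h, mul_assoc]
        _ = Smat * ((X ^ n).transpose * X.transpose) := by rw [ih, mul_assoc]
        _ = Smat * (X ^ (n+1)).transpose := by
              rw [← Matrix.transpose_mul, ← pow_succ']

def Pm (a b : ℕ → ℕ) : ℕ → Matrix (Fin 2) (Fin 2) R2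
  | 0 => 1
  | n+1 => Pm a b n * (A1 ^ a n * A0 ^ b n)

lemma Pm_zero (a b : ℕ → ℕ) : Pm a b 0 = 1 := rfl
lemma Pm_succ (a b : ℕ → ℕ) (n : ℕ) :
    Pm a b (n+1) = Pm a b n * (A1 ^ a n * A0 ^ b n) := rfl

lemma Pm_cons (m : ℕ) (a b : ℕ → ℕ) :
    Pm a b (m+1) = (A1 ^ a 0 * A0 ^ b 0) * Pm (fun j => a (j+1)) (fun j => b (j+1)) m := by
  induction m generalizing a b with
  | zero => simp [Pm_zero, Pm_succ]
  | succ m ih => rw [Pm_succ, ih, Pm_succ, mul_assoc]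

lemma rev_conj (m : ℕ) (a b : ℕ → ℕ) :
    (Pm a b m * A1 ^ a m) * Smat
      = Smat * (Pm (fun j => a (m - j)) (fun j => b (m - 1 - j)) m * A1 ^ a 0).transpose := by
  induction m generalizing a b with
  | zero => simp [Pm_zero, Nat.sub_self, pow_comm A1_comm]
  | succ m ih =>
      have step : (Pm a b (m+1) * A1 ^ a (m+1)) * Smat
          = ((Pm a b m * A1 ^ a m) * Smat)
            * ((A0 ^ b m).transpose * (A1 ^ a (m+1)).transpose) := by
        rw [Pm_succ]
        rw [mul_assoc (Pm a b m) _ (A1 ^ a (m+1))]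
        rw [mul_assoc (A1 ^ a m) (A0 ^ b m) (A1 ^ a (m+1))]
        rw [← mul_assoc (Pm a b m) (A1 ^ a m) _]
        rw [mul_assoc (Pm a b m * A1 ^ a m) _ Smat]
        rw [mul_assoc (A0 ^ b m) (A1 ^ a (m+1)) Smat, pow_comm A1_comm,
          ← mul_assoc (A0 ^ b m), pow_comm A0_comm, mul_assoc Smat, ← mul_assoc _ Smat,
          mul_assoc]
      rw [step, ih]
      have hc := Pm_cons m (fun j => a (m + 1 - j)) (fun j => b (m + 1 - 1 - j))
      have ha : (fun j => a (m + 1 - (j+1))) = fun j => a (m - j) := by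
        funext j; congr 1; omega
      have hb : (fun j => b (m + 1 - 1 - (j+1))) = fun j => b (m - 1 - j) := by
        funext j; congr 1; omega
      rw [ha, hb] at hc
      simp only [Nat.add_sub_cancel, Nat.sub_zero] at hc
      simp only [Nat.sub_self, Nat.add_sub_cancel]
      rw [hc]
      simp only [Matrix.transpose_mul, Matrix.mul_assoc]

lemma ofFn_Pm (m : ℕ) (a b : ℕ → ℕ) :
    (List.ofFn (fun j : Fin m => A1 ^ a j.val * A0 ^ b j.val)).prod = Pm a b m := by
  induction m with
  | zero => simp [Pm_zero]
  | succ m ih =>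
      rw [List.ofFn_succ']
      simp only [Fin.coe_castSucc, Fin.val_last, List.concat_eq_append, List.prod_append,
        List.prod_cons, List.prod_nil, mul_one]
      rw [ih, Pm_succ]

lemma Mmat_form (m : ℕ) (a b : ℕ → ℕ) (t : Fin (2 * (m+1)) → ℕ∞)
    (hk : ∀ j, (hj : j ≤ m) → t ⟨2*j, by omega⟩ = (a j : ℕ∞))
    (hl : ∀ j, (hj : j < m) → t ⟨2*j+1, by omega⟩ = (b j : ℕ∞))
    (htop : t ⟨2*m+1, by omega⟩ = ⊤) :
    Mmat t = Pm a b m * (A1 ^ a m * A0inf) := by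
  unfold Mmat
  rw [← List.ofFn_eq_map, List.ofFn_succ']
  simp only [Fin.coe_castSucc, Fin.val_last, List.concat_eq_append, List.prod_append,
    List.prod_cons, List.prod_nil, mul_one]
  have hfront : (fun i : Fin m =>
      powE A1 A1inf (t ⟨2 * i.val, by omega⟩) * powE A0 A0inf (t ⟨2 * i.val + 1, by omega⟩))
      = fun j : Fin m => A1 ^ a j.val * A0 ^ b j.val := by
    funext j
    rw [hk j.val (by omega), hl j.val j.isLt, powE_coe, powE_coe]
  rw [hfront, ofFn_Pm, hk m le_rfl, htop, powE_coe, powE_top]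

lemma pb_ne : pb ≠ 0 := by
  intro h
  have := congrArg (MvPowerSeries.coeff (Finsupp.single (1 : Fin 2) 1)) h
  simp [pb, MvPowerSeries.coeff_X] at this

lemma one_sub_pb_ne : (1 : R2) - pb ≠ 0 := by
  intro h
  have := congrArg MvPowerSeries.constantCoeff h
  simp [pb, MvPowerSeries.constantCoeff_X] at this

lemma gam_of_P (P : Matrix (Fin 2) (Fin 2) R2) :
    (pb * (1 - pb)) * ((P * A0inf) 0 0) = (P * Smat) 0 0 := by
  have hinv : ((1 : R2) - pb) * (1 - pb)⁻¹ = 1 := by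
    apply MvPowerSeries.mul_inv_cancel
    simp [pb, MvPowerSeries.constantCoeff_X]
  have e1 : (P * A0inf) 0 0 = P 0 0 + P 0 1 * (pa * (1 - pb)⁻¹) := by
    simp [Matrix.mul_apply, Fin.sum_univ_two, A0inf]
  have e2 : (P * Smat) 0 0 = P 0 0 * (pb * (1 - pb)) + P 0 1 * (pa * pb) := by
    simp [Matrix.mul_apply, Fin.sum_univ_two, Smat]
  rw [e1, e2]
  linear_combination (pb * (P 0 1) * pa) * hinv


/-- **Corollary (digit reversal property).**
For finite positive block lengths `k₀,…,k_{N-1} ≥ 1` and `ℓ₀,…,ℓ_{N-2} ≥ 1`,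
`γ_{(k₀,ℓ₀,k₁,ℓ₁,…,k_{N-2},ℓ_{N-2},k_{N-1},∞)}
  = γ_{(k_{N-1},ℓ_{N-2},k_{N-2},ℓ_{N-3},…,k₁,ℓ₀,k₀,∞)}`;
i.e. if `t'` is obtained from `t` by reversing its binary expansion then `γ_t = γ_{t'}`. -/
theorem gamma_digit_reversal (N : ℕ) (hN : 1 ≤ N)
    (k : Fin N → ℕ) (hk : ∀ j, 1 ≤ k j)
    (l : Fin (N - 1) → ℕ) (hl : ∀ j, 1 ≤ l j) :
    gam (interleave (fun j : Fin N => (k j : ℕ∞))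
          (fun j : Fin N => if h : j.val < N - 1 then ((l ⟨j.val, h⟩ : ℕ) : ℕ∞) else ⊤)) =
      gam (interleave
          (fun j : Fin N => (k ⟨N - 1 - j.val, by omega⟩ : ℕ∞))
          (fun j : Fin N =>
            if h : j.val < N - 1 then ((l ⟨N - 2 - j.val, by omega⟩ : ℕ) : ℕ∞) else ⊤)) := by
  obtain ⟨m, rfl⟩ : ∃ m, N = m + 1 := ⟨N - 1, by omega⟩
  set a : ℕ → ℕ := fun j => if h : j < m + 1 then k ⟨j, h⟩ else 0 with ha
  set b : ℕ → ℕ := fun j => if h : j < m + 1 - 1 then l ⟨j, h⟩ else 0 with hb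
  have haj : ∀ j (h : j < m + 1), a j = k ⟨j, h⟩ := by
    intro j h; simp only [ha]; rw [dif_pos h]
  have hbj : ∀ j (h : j < m + 1 - 1), b j = l ⟨j, h⟩ := by
    intro j h; simp only [hb]; rw [dif_pos h]
  have h1 : Mmat (interleave (fun j : Fin (m+1) => (k j : ℕ∞))
      (fun j : Fin (m+1) => if h : j.val < m + 1 - 1 then ((l ⟨j.val, h⟩ : ℕ) : ℕ∞) else ⊤))
      = Pm a b m * (A1 ^ a m * A0inf) := by
    apply Mmat_form
    · intro j hj
      simp only [interleave]
      rw [if_pos (by omega : 2 * j % 2 = 0)]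
      simp only [show 2 * j / 2 = j from by omega]
      rw [haj j (by omega)]
    · intro j hj
      simp only [interleave]
      rw [if_neg (by omega : ¬ (2 * j + 1) % 2 = 0)]
      simp only [show (2 * j + 1) / 2 = j from by omega]
      rw [dif_pos (show j < m + 1 - 1 by omega), hbj j (by omega)]
    · simp only [interleave]
      rw [if_neg (by omega : ¬ (2 * m + 1) % 2 = 0)]
      simp only [show (2 * m + 1) / 2 = m from by omega]
      rw [dif_neg (by omega)]
  have h2 : Mmat (interleave
      (fun j : Fin (m+1) => (k ⟨m + 1 - 1 - j.val, by omega⟩ : ℕ∞))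
      (fun j : Fin (m+1) =>
        if h : j.val < m + 1 - 1 then ((l ⟨m + 1 - 2 - j.val, by omega⟩ : ℕ) : ℕ∞) else ⊤))
      = Pm (fun j => a (m - j)) (fun j => b (m - 1 - j)) m
        * (A1 ^ ((fun j => a (m - j)) m) * A0inf) := by
    apply Mmat_form
    · intro j hj
      simp only [interleave]
      rw [if_pos (by omega : 2 * j % 2 = 0)]
      simp only [show 2 * j / 2 = j from by omega,
        show m + 1 - 1 - j = m - j from by omega]
      rw [haj (m - j) (by omega)]
    · intro j hj
      simp only [interleave]
      rw [if_neg (by omega : ¬ (2 * j + 1) % 2 = 0)]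
      simp only [show (2 * j + 1) / 2 = j from by omega,
        show m + 1 - 2 - j = m - 1 - j from by omega]
      rw [dif_pos (show j < m + 1 - 1 by omega), hbj (m - 1 - j) (by omega)]
    · simp only [interleave]
      rw [if_neg (by omega : ¬ (2 * m + 1) % 2 = 0)]
      simp only [show (2 * m + 1) / 2 = m from by omega]
      rw [dif_neg (by omega)]
  have ha0 : (fun j => a (m - j)) m = a 0 := by simp
  rw [ha0] at h2
  have hrev := rev_conj m a b
  set P := Pm a b m * A1 ^ a m with hP
  set Q := Pm (fun j => a (m - j)) (fun j => b (m - 1 - j)) m * A1 ^ a 0 with hQ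
  have key : (P * Smat) 0 0 = (Q * Smat) 0 0 := by
    rw [hrev]
    simp [Matrix.mul_apply, Fin.sum_univ_two, Smat, Matrix.transpose_apply]
    ring
  simp only [gam]
  rw [h1, h2, ← mul_assoc, ← mul_assoc, ← hP, ← hQ]
  apply mul_left_cancel₀ (mul_ne_zero pb_ne one_sub_pb_ne)
  rw [gam_of_P, gam_of_P]
  exact key
end
end

section
/- Let N ≥ 1 and 𝐭 ∈ ℕ̄₊^{2N}, and write M(𝐭) = [[𝔞,𝔟],[𝔠,𝔡]] with 𝔞,𝔟,𝔠,𝔡 ∈ R. Then: (i) every coefficient [α^i β^j] of each of 𝔞, 𝔟, 𝔠, 𝔡 is a nonnegative real number; (ii) Σ_{i,j ≥ 0} 2^{−(i+j)} [α^i β^j](𝔞 + 𝔟) = 1 and Σ_{i,j ≥ 0} 2^{−(i+j)} [α^i β^j](𝔠 + 𝔡) = 1, both sums being absolutely convergent. -/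
open MvPowerSeries Finset

noncomputable section

/-- `2^{−(i+j)}` times the (real) coefficient `[α^i β^j] f`. -/
def coefw (i j : ℕ) (f : R2) : ℝ :=
  ((2 : ℝ) ^ (i + j))⁻¹ *
    (MvPowerSeries.coeff (Finsupp.single (0 : Fin 2) i + Finsupp.single (1 : Fin 2) j) f).re

set_option linter.dupNamespace false

namespace Mg

abbrev P := Fin 2 →₀ ℕ

def W (d : P) : ℝ := ((2:ℝ) ^ (d 0 + d 1))⁻¹

lemma W_pos (d : P) : 0 < W d := by unfold W; positivity

lemma W_zero : W 0 = 1 := by simp [W]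

lemma W_add (d e : P) : W (d + e) = W d * W e := by
  unfold W
  rw [Finsupp.add_apply, Finsupp.add_apply,
    show (d 0 + e 0) + (d 1 + e 1) = (d 0 + d 1) + (e 0 + e 1) by omega,
    pow_add, mul_inv]

def F (f : R2) (d : P) : ℝ := W d * (MvPowerSeries.coeff d f).re

structure Good (f : R2) : Prop where
  him : ∀ d, (MvPowerSeries.coeff d f).im = 0
  hre : ∀ d, 0 ≤ (MvPowerSeries.coeff d f).re
  hs : Summable (F f)

def Phi (f : R2) : ℝ := ∑' d, F f d

lemma good_zero : Good 0 := ⟨by simp, by simp, (summable_zero : Summable fun _ : P => (0:ℝ)).congr fun d => by simp [F]⟩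

lemma Phi_zero : Phi 0 = 0 := by simp [Phi, F]

lemma F_add (f g : R2) : F (f + g) = fun d => F f d + F g d := by
  funext d; simp [F, mul_add]

lemma Good.add {f g : R2} (hf : Good f) (hg : Good g) : Good (f + g) where
  him d := by simp [hf.him d, hg.him d]
  hre d := by simp only [map_add, Complex.add_re]; exact add_nonneg (hf.hre d) (hg.hre d)
  hs := by rw [F_add]; exact hf.hs.add hg.hs

lemma Phi_add {f g : R2} (hf : Good f) (hg : Good g) : Phi (f + g) = Phi f + Phi g := by
  rw [Phi, F_add]; exact Summable.tsum_add hf.hs hg.hs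

lemma F_mul (f g : R2) (hf : ∀ d, (MvPowerSeries.coeff d f).im = 0)
    (hg : ∀ d, (MvPowerSeries.coeff d g).im = 0) (d : P) :
    F (f * g) d = ∑ p ∈ antidiagonal d, F f p.1 * F g p.2 := by
  rw [F, MvPowerSeries.coeff_mul, Complex.re_sum, Finset.mul_sum]
  refine Finset.sum_congr rfl fun p hp => ?_
  rw [Finset.HasAntidiagonal.mem_antidiagonal] at hp
  rw [Complex.mul_re, hf, hg, mul_zero, sub_zero, ← hp, W_add, F, F]
  ring

lemma Good.mulAux {f g : R2} (hf : Good f) (hg : Good g) :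
    Summable (fun x : P × P => F f x.1 * F g x.2) :=
  hf.hs.mul_of_nonneg hg.hs (fun d => mul_nonneg (W_pos d).le (hf.hre d))
    (fun d => mul_nonneg (W_pos d).le (hg.hre d))

lemma Good.mul {f g : R2} (hf : Good f) (hg : Good g) : Good (f * g) where
  him d := by
    rw [MvPowerSeries.coeff_mul, Complex.im_sum]
    exact Finset.sum_eq_zero fun p _ => by
      rw [Complex.mul_im, hf.him, hg.him, zero_mul, mul_zero, add_zero]
  hre d := by
    rw [MvPowerSeries.coeff_mul, Complex.re_sum]
    refine Finset.sum_nonneg fun p _ => ?_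
    rw [Complex.mul_re, hf.him, hg.him, mul_zero, sub_zero]
    exact mul_nonneg (hf.hre _) (hg.hre _)
  hs := (summable_sum_mul_antidiagonal_of_summable_mul (hf.mulAux hg)).congr
    fun d => (F_mul f g hf.him hg.him d).symm

lemma Phi_mul {f g : R2} (hf : Good f) (hg : Good g) : Phi (f * g) = Phi f * Phi g := by
  rw [Phi, Phi, Phi, Summable.tsum_mul_tsum_eq_tsum_sum_antidiagonal hf.hs hg.hs (hf.mulAux hg)]
  exact tsum_congr fun d => F_mul f g hf.him hg.him d

lemma good_one : Good 1 where
  him d := by rw [MvPowerSeries.coeff_one]; split <;> simp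
  hre d := by rw [MvPowerSeries.coeff_one]; split <;> simp
  hs := summable_of_ne_finset_zero (s := {(0 : P)}) fun d hd => by
    simp only [Finset.mem_singleton] at hd
    simp [F, MvPowerSeries.coeff_one, hd]

lemma Phi_one : Phi 1 = 1 := by
  rw [Phi, tsum_eq_single (0 : P) (fun d hd => by simp [F, MvPowerSeries.coeff_one, hd])]
  simp [F, MvPowerSeries.coeff_one, W_zero]

lemma good_X (s : Fin 2) : Good (MvPowerSeries.X s : R2) where
  him d := by rw [MvPowerSeries.coeff_X]; split <;> simp
  hre d := by rw [MvPowerSeries.coeff_X]; split <;> simp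
  hs := summable_of_ne_finset_zero (s := {Finsupp.single s 1}) fun d hd => by
    simp only [Finset.mem_singleton] at hd
    simp [F, MvPowerSeries.coeff_X, hd]

lemma Phi_X (s : Fin 2) : Phi (MvPowerSeries.X s : R2) = W (Finsupp.single s 1) := by
  rw [Phi, tsum_eq_single (Finsupp.single s 1)
    (fun d hd => by simp [F, MvPowerSeries.coeff_X, hd])]
  simp [F, MvPowerSeries.coeff_X]

lemma Phi_pa : Phi pa = 2⁻¹ := by
  rw [pa, Phi_X]
  norm_num [W, Finsupp.single_apply]

lemma Phi_pb : Phi pb = 2⁻¹ := by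
  rw [pb, Phi_X]
  norm_num [W, Finsupp.single_apply]

def geom (u : Fin 2) : R2 := fun d => if d u = 0 then 1 else 0

lemma coeff_geom (u : Fin 2) (d : P) :
    MvPowerSeries.coeff d (geom u) = if d u = 0 then 1 else 0 := rfl

lemma geom_mul (u v : Fin 2) (huv : v ≠ u) (hall : ∀ x : Fin 2, x = u ∨ x = v) :
    geom u * (1 - MvPowerSeries.X v) = 1 := by
  ext d
  rw [mul_sub, mul_one, map_sub]
  have hXv : MvPowerSeries.coeff d (geom u * MvPowerSeries.X v)
      = if d v = 0 then 0 else (if d u = 0 then 1 else 0) := by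
    rw [MvPowerSeries.coeff_mul]
    by_cases hd : d v = 0
    · rw [if_pos hd]
      refine Finset.sum_eq_zero fun p hp => ?_
      rw [Finset.HasAntidiagonal.mem_antidiagonal] at hp
      rw [MvPowerSeries.coeff_X, if_neg, mul_zero]
      intro h
      have h2 := congrArg (fun f : P => f v) hp
      simp only [Finsupp.add_apply, h, Finsupp.single_eq_same] at h2
      omega
    · rw [if_neg hd]
      have hle : Finsupp.single v 1 ≤ d :=
        Finsupp.single_le_iff.2 (Nat.one_le_iff_ne_zero.2 hd)
      rw [Finset.sum_eq_single (d - Finsupp.single v 1, Finsupp.single v 1)]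
      · rw [MvPowerSeries.coeff_X, if_pos rfl, mul_one, coeff_geom]
        congr 1
        rw [Finsupp.tsub_apply, Finsupp.single_apply, if_neg huv, tsub_zero]
      · intro p hp hne
        rw [Finset.HasAntidiagonal.mem_antidiagonal] at hp
        rw [MvPowerSeries.coeff_X]
        by_cases h2 : p.2 = Finsupp.single v 1
        · exfalso
          apply hne
          have h1 : p.1 = d - Finsupp.single v 1 := by
            rw [← hp, h2]; simp
          exact Prod.ext h1 h2
        · rw [if_neg h2, mul_zero]
      · intro h
        exact absurd (Finset.HasAntidiagonal.mem_antidiagonal.2 (tsub_add_cancel_of_le hle)) h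
  rw [hXv, coeff_geom, MvPowerSeries.coeff_one]
  by_cases h0 : d v = 0
  · have hd0 : d = 0 ↔ d u = 0 := by
      constructor
      · intro h; simp [h]
      · intro h; ext x; rcases hall x with rfl | rfl <;> simp [h, h0]
    by_cases h1 : d u = 0
    · rw [if_pos h1, if_pos h0, if_pos (hd0.2 h1)]; ring
    · rw [if_neg h1, if_pos h0, if_neg (fun h => h1 (hd0.1 h))]; ring
  · have hd : d ≠ 0 := fun h => h0 (by simp [h])
    rw [if_neg h0, if_neg hd, sub_self]

lemma inv_one_sub_pb : (1 - pb)⁻¹ = geom 0 := by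
  rw [MvPowerSeries.inv_eq_iff_mul_eq_one]
  · exact geom_mul 0 1 (by decide) (by decide)
  · rw [pb, map_sub, map_one, MvPowerSeries.constantCoeff_X]; norm_num

lemma inv_one_sub_pa : (1 - pa)⁻¹ = geom 1 := by
  rw [MvPowerSeries.inv_eq_iff_mul_eq_one]
  · exact geom_mul 1 0 (by decide) (by decide)
  · rw [pa, map_sub, map_one, MvPowerSeries.constantCoeff_X]; norm_num

def e2 : P ≃ ℕ × ℕ where
  toFun d := (d 0, d 1)
  invFun p := Finsupp.single 0 p.1 + Finsupp.single 1 p.2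
  left_inv d := by
    ext x
    fin_cases x <;> simp [Finsupp.single_apply]
  right_inv p := by
    cases p
    simp [Finsupp.single_apply]

lemma indic_summable : Summable (fun i : ℕ => if i = 0 then (1:ℝ) else 0) :=
  summable_of_ne_finset_zero (s := {0}) fun i hi => by
    simp only [Finset.mem_singleton] at hi; simp [hi]

lemma indic_tsum : (∑' i : ℕ, if i = 0 then (1:ℝ) else 0) = 1 := by
  rw [tsum_eq_single 0 (fun i hi => by simp [hi])]; simp

lemma indic_nonneg : ∀ i : ℕ, (0:ℝ) ≤ if i = 0 then (1:ℝ) else 0 := fun i => by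
  split <;> norm_num

lemma half_nonneg : ∀ i : ℕ, (0:ℝ) ≤ ((1:ℝ)/2) ^ i := fun i => by positivity

lemma F_geom0 (d : P) :
    F (geom 0) d = (if d 0 = 0 then (1:ℝ) else 0) * ((1:ℝ)/2) ^ (d 1) := by
  by_cases h : d 0 = 0
  · simp [F, W, coeff_geom, h, one_div, inv_pow]
  · simp [F, coeff_geom, h]

lemma F_geom1 (d : P) :
    F (geom 1) d = ((1:ℝ)/2) ^ (d 0) * (if d 1 = 0 then (1:ℝ) else 0) := by
  by_cases h : d 1 = 0
  · simp [F, W, coeff_geom, h, one_div, inv_pow]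
  · simp [F, coeff_geom, h]

lemma good_geom0 : Good (geom 0) where
  him d := by rw [coeff_geom]; split <;> simp
  hre d := by rw [coeff_geom]; split <;> simp
  hs := by
    have h : Summable ((fun p : ℕ × ℕ =>
        (if p.1 = 0 then (1:ℝ) else 0) * ((1:ℝ)/2) ^ p.2) ∘ e2) :=
      (e2.summable_iff).2 (indic_summable.mul_of_nonneg summable_geometric_two
        indic_nonneg half_nonneg)
    exact h.congr fun d => (F_geom0 d).symm

set_option maxHeartbeats 1000000 in
lemma good_geom1 : Good (geom 1) where
  him d := by rw [coeff_geom]; split <;> simp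
  hre d := by rw [coeff_geom]; split <;> simp
  hs := by
    have h : Summable ((fun p : ℕ × ℕ =>
        ((1:ℝ)/2) ^ p.1 * (if p.2 = 0 then (1:ℝ) else 0)) ∘ e2) :=
      (e2.summable_iff).2 (summable_geometric_two.mul_of_nonneg indic_summable
        half_nonneg indic_nonneg)
    exact h.congr fun d => (F_geom1 d).symm

lemma Phi_geom0 : Phi (geom 0) = 2 := by
  have h1 : Phi (geom 0) = ∑' p : ℕ × ℕ,
      (if p.1 = 0 then (1:ℝ) else 0) * ((1:ℝ)/2) ^ p.2 := by
    rw [Phi, ← e2.tsum_eq (fun p : ℕ × ℕ =>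
      (if p.1 = 0 then (1:ℝ) else 0) * ((1:ℝ)/2) ^ p.2)]
    exact tsum_congr fun d => F_geom0 d
  rw [h1, ← Summable.tsum_mul_tsum indic_summable summable_geometric_two
    (indic_summable.mul_of_nonneg summable_geometric_two indic_nonneg half_nonneg),
    indic_tsum, tsum_geometric_two, one_mul]

set_option maxHeartbeats 1000000 in
lemma Phi_geom1 : Phi (geom 1) = 2 := by
  have h1 : Phi (geom 1) = ∑' p : ℕ × ℕ,
      ((1:ℝ)/2) ^ p.1 * (if p.2 = 0 then (1:ℝ) else 0) := by
    rw [Phi, ← e2.tsum_eq (fun p : ℕ × ℕ =>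
      ((1:ℝ)/2) ^ p.1 * (if p.2 = 0 then (1:ℝ) else 0))]
    exact tsum_congr fun d => F_geom1 d
  rw [h1, ← Summable.tsum_mul_tsum summable_geometric_two indic_summable
    (summable_geometric_two.mul_of_nonneg indic_summable half_nonneg indic_nonneg),
    indic_tsum, tsum_geometric_two, mul_one]

lemma good_pa : Good pa := good_X 0
lemma good_pb : Good pb := good_X 1

structure GoodM (M : Matrix (Fin 2) (Fin 2) R2) : Prop where
  g : ∀ p q, Good (M p q)
  row : ∀ p, Phi (M p 0) + Phi (M p 1) = 1

lemma GoodM.mul {M N : Matrix (Fin 2) (Fin 2) R2} (hM : GoodM M) (hN : GoodM N) :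
    GoodM (M * N) where
  g p q := by
    rw [Matrix.mul_apply, Fin.sum_univ_two]
    exact ((hM.g p 0).mul (hN.g 0 q)).add ((hM.g p 1).mul (hN.g 1 q))
  row p := by
    rw [Matrix.mul_apply, Matrix.mul_apply, Fin.sum_univ_two, Fin.sum_univ_two,
      Phi_add ((hM.g p 0).mul (hN.g 0 0)) ((hM.g p 1).mul (hN.g 1 0)),
      Phi_add ((hM.g p 0).mul (hN.g 0 1)) ((hM.g p 1).mul (hN.g 1 1)),
      Phi_mul (hM.g p 0) (hN.g 0 0), Phi_mul (hM.g p 1) (hN.g 1 0),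
      Phi_mul (hM.g p 0) (hN.g 0 1), Phi_mul (hM.g p 1) (hN.g 1 1)]
    have h0 := hN.row 0
    have h1 := hN.row 1
    have hp := hM.row p
    linear_combination Phi (M p 0) * h0 + Phi (M p 1) * h1 + hp

lemma goodM_one : GoodM 1 where
  g p q := by
    by_cases h : p = q
    · subst h; rw [Matrix.one_apply_eq]; exact good_one
    · rw [Matrix.one_apply_ne h]; exact good_zero
  row := by
    rw [Fin.forall_fin_two]
    constructor
    · rw [Matrix.one_apply_eq, Matrix.one_apply_ne (by decide), Phi_one, Phi_zero]; norm_num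
    · rw [Matrix.one_apply_ne (by decide), Matrix.one_apply_eq, Phi_one, Phi_zero]; norm_num

lemma GoodM.pow {M : Matrix (Fin 2) (Fin 2) R2} (hM : GoodM M) (n : ℕ) : GoodM (M ^ n) := by
  induction n with
  | zero => rw [pow_zero]; exact goodM_one
  | succ n ih => rw [pow_succ]; exact ih.mul hM

lemma goodM_A0 : GoodM A0 where
  g p q := by
    fin_cases p <;> fin_cases q <;>
      simp only [A0, Fin.isValue, Matrix.of_apply, Matrix.cons_val', Matrix.cons_val_zero,
        Matrix.empty_val', Matrix.cons_val_fin_one, Matrix.cons_val_one,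
        Matrix.head_fin_const, Matrix.head_cons] <;>
      first
        | exact good_one
        | exact good_zero
        | exact good_pa
        | exact good_pb
  row := by
    rw [A0]
    rw [Fin.forall_fin_two]
    constructor
    · simp only [Fin.isValue, Matrix.of_apply, Matrix.cons_val', Matrix.cons_val_zero,
        Matrix.empty_val', Matrix.cons_val_fin_one, Matrix.cons_val_one,
        Matrix.head_fin_const, Matrix.head_cons]
      rw [Phi_one, Phi_zero]; norm_num
    · simp only [Fin.isValue, Matrix.of_apply, Matrix.cons_val', Matrix.cons_val_zero,
        Matrix.empty_val', Matrix.cons_val_fin_one, Matrix.cons_val_one,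
        Matrix.head_fin_const, Matrix.head_cons]
      rw [Phi_pa, Phi_pb]; norm_num

lemma goodM_A1 : GoodM A1 where
  g p q := by
    fin_cases p <;> fin_cases q <;>
      simp only [A1, Fin.isValue, Matrix.of_apply, Matrix.cons_val', Matrix.cons_val_zero,
        Matrix.empty_val', Matrix.cons_val_fin_one, Matrix.cons_val_one,
        Matrix.head_fin_const, Matrix.head_cons] <;>
      first
        | exact good_one
        | exact good_zero
        | exact good_pa
        | exact good_pb
  row := by
    rw [A1]
    rw [Fin.forall_fin_two]
    constructor
    · simp only [Fin.isValue, Matrix.of_apply, Matrix.cons_val', Matrix.cons_val_zero,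
        Matrix.empty_val', Matrix.cons_val_fin_one, Matrix.cons_val_one,
        Matrix.head_fin_const, Matrix.head_cons]
      rw [Phi_pa, Phi_pb]; norm_num
    · simp only [Fin.isValue, Matrix.of_apply, Matrix.cons_val', Matrix.cons_val_zero,
        Matrix.empty_val', Matrix.cons_val_fin_one, Matrix.cons_val_one,
        Matrix.head_fin_const, Matrix.head_cons]
      rw [Phi_one, Phi_zero]; norm_num

lemma A0inf_eq : A0inf = !![1, 0; pa * geom 0, 0] := by
  rw [A0inf, inv_one_sub_pb]

lemma A1inf_eq : A1inf = !![0, pb * geom 1; 0, 1] := by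
  rw [A1inf, inv_one_sub_pa]

lemma goodM_A0inf : GoodM A0inf where
  g p q := by
    rw [A0inf_eq]
    fin_cases p <;> fin_cases q <;>
      simp only [Fin.isValue, Matrix.of_apply, Matrix.cons_val', Matrix.cons_val_zero,
        Matrix.empty_val', Matrix.cons_val_fin_one, Matrix.cons_val_one,
        Matrix.head_fin_const, Matrix.head_cons] <;>
      first
        | exact good_one
        | exact good_zero
        | exact good_pa.mul good_geom0
  row := by
    rw [A0inf_eq]
    rw [Fin.forall_fin_two]
    constructor
    · simp only [Fin.isValue, Matrix.of_apply, Matrix.cons_val', Matrix.cons_val_zero,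
        Matrix.empty_val', Matrix.cons_val_fin_one, Matrix.cons_val_one,
        Matrix.head_fin_const, Matrix.head_cons]
      rw [Phi_one, Phi_zero]; norm_num
    · simp only [Fin.isValue, Matrix.of_apply, Matrix.cons_val', Matrix.cons_val_zero,
        Matrix.empty_val', Matrix.cons_val_fin_one, Matrix.cons_val_one,
        Matrix.head_fin_const, Matrix.head_cons]
      rw [Phi_mul good_pa good_geom0, Phi_pa, Phi_geom0, Phi_zero]; norm_num

lemma goodM_A1inf : GoodM A1inf where
  g p q := by
    rw [A1inf_eq]
    fin_cases p <;> fin_cases q <;>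
      simp only [Fin.isValue, Matrix.of_apply, Matrix.cons_val', Matrix.cons_val_zero,
        Matrix.empty_val', Matrix.cons_val_fin_one, Matrix.cons_val_one,
        Matrix.head_fin_const, Matrix.head_cons] <;>
      first
        | exact good_one
        | exact good_zero
        | exact good_pb.mul good_geom1
  row := by
    rw [A1inf_eq]
    rw [Fin.forall_fin_two]
    constructor
    · simp only [Fin.isValue, Matrix.of_apply, Matrix.cons_val', Matrix.cons_val_zero,
        Matrix.empty_val', Matrix.cons_val_fin_one, Matrix.cons_val_one,
        Matrix.head_fin_const, Matrix.head_cons]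
      rw [Phi_mul good_pb good_geom1, Phi_pb, Phi_geom1, Phi_zero]; norm_num
    · simp only [Fin.isValue, Matrix.of_apply, Matrix.cons_val', Matrix.cons_val_zero,
        Matrix.empty_val', Matrix.cons_val_fin_one, Matrix.cons_val_one,
        Matrix.head_fin_const, Matrix.head_cons]
      rw [Phi_one, Phi_zero]; norm_num

lemma goodM_listProd : ∀ l : List (Matrix (Fin 2) (Fin 2) R2),
    (∀ m ∈ l, GoodM m) → GoodM l.prod
  | [], _ => by rw [List.prod_nil]; exact goodM_one
  | (m :: l), h => by
      rw [List.prod_cons]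
      exact (h m (by simp)).mul (goodM_listProd l fun x hx => h x (by simp [hx]))


lemma goodM_powE {A Ainf : Matrix (Fin 2) (Fin 2) R2} (hA : GoodM A) (hAi : GoodM Ainf) :
    ∀ k : ℕ∞, GoodM (powE A Ainf k)
  | ⊤ => hAi
  | (n : ℕ) => hA.pow n

lemma goodM_Mmat {N : ℕ} (t : Fin (2 * N) → ℕ∞) : GoodM (Mmat t) := by
  refine goodM_listProd _ fun m hm => ?_
  rw [List.mem_map] at hm
  obtain ⟨j, _, rfl⟩ := hm
  exact (goodM_powE goodM_A1 goodM_A1inf _).mul (goodM_powE goodM_A0 goodM_A0inf _)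

lemma W_single_add (i j : ℕ) :
    W (Finsupp.single (0 : Fin 2) i + Finsupp.single (1 : Fin 2) j) = ((2:ℝ) ^ (i + j))⁻¹ := by
  have h0 : (Finsupp.single (0 : Fin 2) i + Finsupp.single (1 : Fin 2) j) 0 = i := by
    rw [Finsupp.add_apply, Finsupp.single_eq_same, Finsupp.single_eq_of_ne (by decide), add_zero]
  have h1 : (Finsupp.single (0 : Fin 2) i + Finsupp.single (1 : Fin 2) j) 1 = j := by
    rw [Finsupp.add_apply, Finsupp.single_eq_of_ne (by decide), Finsupp.single_eq_same, zero_add]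
  rw [W, h0, h1]

lemma coefw_eq (i j : ℕ) (f : R2) : coefw i j f = F f (e2.symm (i, j)) := by
  have he : e2.symm (i, j) = Finsupp.single (0 : Fin 2) i + Finsupp.single (1 : Fin 2) j := rfl
  rw [coefw, F, he, W_single_add]

set_option maxHeartbeats 2000000 in
lemma row_final {M : Matrix (Fin 2) (Fin 2) R2} (h : GoodM M) (x : Fin 2) :
    Summable (fun p : ℕ × ℕ => coefw p.1 p.2 (M x 0 + M x 1)) ∧
      (∑' p : ℕ × ℕ, coefw p.1 p.2 (M x 0 + M x 1)) = 1 := by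
  have hgood : Good (M x 0 + M x 1) := (h.g x 0).add (h.g x 1)
  have heq : (fun p : ℕ × ℕ => coefw p.1 p.2 (M x 0 + M x 1))
      = fun p : ℕ × ℕ => F (M x 0 + M x 1) (e2.symm p) := by
    funext p
    exact coefw_eq p.1 p.2 (M x 0 + M x 1)
  constructor
  · rw [heq]
    exact (Equiv.summable_iff e2.symm).2 hgood.hs
  · rw [heq, Equiv.tsum_eq e2.symm (F (M x 0 + M x 1))]
    have : Phi (M x 0 + M x 1) = 1 := by
      rw [Phi_add (h.g x 0) (h.g x 1)]
      exact h.row x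
    exact this

end Mg


/-- **Lemma (nonnegative coefficients and total mass of `M(𝐭)`).**
Writing `M(𝐭) = [[𝔞,𝔟],[𝔠,𝔡]]`: (i) every coefficient of `𝔞,𝔟,𝔠,𝔡` is a nonnegative
real number; (ii) `Σ_{i,j≥0} 2^{−(i+j)} [α^i β^j](𝔞+𝔟) = 1` and
`Σ_{i,j≥0} 2^{−(i+j)} [α^i β^j](𝔠+𝔡) = 1`, both sums being absolutely convergent. -/
theorem Mmat_coeff_nonneg_and_row_sums (N : ℕ) (hN : 1 ≤ N)
    (t : Fin (2 * N) → ℕ∞) (ht : ∀ i, t i ≠ 0) :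
    (∀ (p q : Fin 2) (d : Fin 2 →₀ ℕ),
        (MvPowerSeries.coeff d (Mmat t p q)).im = 0 ∧
        0 ≤ (MvPowerSeries.coeff d (Mmat t p q)).re) ∧
    Summable (fun p : ℕ × ℕ => coefw p.1 p.2 (Mmat t 0 0 + Mmat t 0 1)) ∧
    (∑' p : ℕ × ℕ, coefw p.1 p.2 (Mmat t 0 0 + Mmat t 0 1)) = 1 ∧
    Summable (fun p : ℕ × ℕ => coefw p.1 p.2 (Mmat t 1 0 + Mmat t 1 1)) ∧
    (∑' p : ℕ × ℕ, coefw p.1 p.2 (Mmat t 1 0 + Mmat t 1 1)) = 1 := by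
  have H := Mg.goodM_Mmat t
  exact ⟨fun p q d => ⟨(H.g p q).him d, (H.g p q).hre d⟩,
    (Mg.row_final H 0).1, (Mg.row_final H 0).2,
    (Mg.row_final H 1).1, (Mg.row_final H 1).2⟩
end
end

section
/- Let N ≥ 1, 𝐭 ∈ ℕ̄₊^{2N}, and a ∈ ℤ. Suppose (𝐭^{(n)})_{n≥0} is a sequence in ℕ̄₊^{2N} converging to 𝐭 componentwise (where a sequence in ℕ̄₊ converges to a finite value iff it is eventually equal to it, and converges to ∞ iff it tends to ∞). Then lim_{n→∞} Δ_{𝐭^{(n)}}(a) = Δ_𝐭(a). -/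
open MvPowerSeries Finset

noncomputable section

/-- `Δ_𝐭(a) = Σ_{i−j ≥ a} 2^{−(i+j)} [α^i β^j] γ_𝐭`. -/
def Delta {N : ℕ} (t : Fin (2 * N) → ℕ∞) (a : ℤ) : ℝ :=
  ∑' p : ℕ × ℕ, if a ≤ (p.1 : ℤ) - (p.2 : ℤ) then coefw p.1 p.2 (gam t) else 0

namespace DeltaAux

open Filter

/-- geometric partial sum -/
def Sgeo (v : Fin 2) (n : ℕ) : R2 := ∑ m ∈ Finset.range n, (X v : R2) ^ m

lemma Sgeo_succ (v : Fin 2) (n : ℕ) : Sgeo v (n+1) = Sgeo v n + (X v : R2) ^ n :=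
  Finset.sum_range_succ _ _

lemma one_sub_mul_Sgeo (v : Fin 2) (n : ℕ) :
    ((1 : R2) - X v) * Sgeo v n = 1 - (X v : R2) ^ n := by
  induction n with
  | zero => simp [Sgeo]
  | succ n ih => rw [Sgeo_succ, mul_add, ih]; ring

lemma constCoeff_one_sub_X (v : Fin 2) :
    constantCoeff ((1 : R2) - X v) ≠ 0 := by
  simp

lemma inv_one_sub_X_eq (v : Fin 2) (n : ℕ) :
    ((1 : R2) - X v)⁻¹ = Sgeo v n + (X v : R2) ^ n * (1 - X v)⁻¹ := by
  symm
  rw [MvPowerSeries.eq_inv_iff_mul_eq_one (constCoeff_one_sub_X v)]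
  have h1 := one_sub_mul_Sgeo v n
  have h2 := MvPowerSeries.inv_mul_cancel _ (constCoeff_one_sub_X v)
  calc (Sgeo v n + (X v : R2) ^ n * (1 - X v)⁻¹) * (1 - X v)
      = (1 - X v) * Sgeo v n + (X v : R2) ^ n * ((1 - X v)⁻¹ * (1 - X v)) := by ring
    _ = 1 := by rw [h1, h2]; ring

lemma coeff_X_pow_mul_eq_zero {v : Fin 2} {k : ℕ} {f : R2} {d : Fin 2 →₀ ℕ}
    (h : d v < k) : coeff d ((X v : R2) ^ k * f) = 0 := by
  classical
  rw [X_pow_eq, coeff_monomial_mul, if_neg]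
  rw [Finsupp.single_le_iff]
  omega

lemma norm_coeff_X_pow_le {v : Fin 2} {k : ℕ} (d : Fin 2 →₀ ℕ) :
    ‖coeff d ((X v : R2) ^ k)‖ ≤ 1 := by
  classical
  rw [coeff_X_pow]
  split_ifs <;> simp

lemma norm_coeff_Sgeo_le {v : Fin 2} {n : ℕ} (d : Fin 2 →₀ ℕ) :
    ‖coeff d (Sgeo v n)‖ ≤ 1 := by
  classical
  have h1 : coeff d (Sgeo v n) = ∑ m ∈ Finset.range n,
      (if d = Finsupp.single v m then (1:ℂ) else 0) := by
    rw [Sgeo, map_sum]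
    exact Finset.sum_congr rfl fun m _ => coeff_X_pow d v m
  have h2 : ∀ m ∈ Finset.range n,
      (if d = Finsupp.single v m then (1:ℂ) else 0)
        = if m = d v then (if d = Finsupp.single v m then (1:ℂ) else 0) else 0 := by
    intro m _
    by_cases h : m = d v
    · rw [if_pos h]
    · rw [if_neg h, if_neg]
      intro hd
      exact h (by rw [hd, Finsupp.single_eq_same])
  rw [h1, Finset.sum_congr rfl h2, Finset.sum_ite_eq' (Finset.range n) (d v)]
  split_ifs <;> simp

lemma norm_coeff_inv_le {v : Fin 2} (d : Fin 2 →₀ ℕ) :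
    ‖coeff d (((1 : R2) - X v)⁻¹)‖ ≤ 1 := by
  rw [inv_one_sub_X_eq v (d v + 1), map_add,
    coeff_X_pow_mul_eq_zero (by omega), add_zero]
  exact norm_coeff_Sgeo_le d

end DeltaAux
namespace DeltaAux

lemma A1_pow (n : ℕ) : A1 ^ n = !![pa ^ n, pb * Sgeo 0 n; 0, 1] := by
  induction n with
  | zero => simp [Sgeo, Matrix.one_fin_two]
  | succ n ih =>
      rw [pow_succ, ih, A1, Matrix.mul_fin_two]
      refine Matrix.ext fun i j => ?_
      fin_cases i <;> fin_cases j <;>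
        simp [Sgeo_succ, pa, pb, pow_succ] <;> ring

lemma A0_pow (n : ℕ) : A0 ^ n = !![1, 0; pa * Sgeo 1 n, pb ^ n] := by
  induction n with
  | zero => simp [Sgeo, Matrix.one_fin_two]
  | succ n ih =>
      rw [pow_succ, ih, A0, Matrix.mul_fin_two]
      refine Matrix.ext fun i j => ?_
      fin_cases i <;> fin_cases j <;>
        simp [Sgeo_succ, pa, pb, pow_succ] <;> ring

end DeltaAux
namespace DeltaAux

/-- weight of a monomial -/
def Wt (d : Fin 2 →₀ ℕ) : ℝ := ((d 0 : ℝ) + 2) * ((d 1 : ℝ) + 2)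

lemma one_le_Wt (d : Fin 2 →₀ ℕ) : 1 ≤ Wt d := by
  have h0 : (0:ℝ) ≤ (d 0 : ℝ) := Nat.cast_nonneg _
  have h1 : (0:ℝ) ≤ (d 1 : ℝ) := Nat.cast_nonneg _
  unfold Wt; nlinarith

lemma two_le_Wt (d : Fin 2 →₀ ℕ) : 2 ≤ Wt d := by
  have h0 : (0:ℝ) ≤ (d 0 : ℝ) := Nat.cast_nonneg _
  have h1 : (0:ℝ) ≤ (d 1 : ℝ) := Nat.cast_nonneg _
  unfold Wt; nlinarith

lemma Wt_pos (d : Fin 2 →₀ ℕ) : 0 < Wt d := lt_of_lt_of_le one_pos (one_le_Wt d)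

lemma Wt_mono {u d : Fin 2 →₀ ℕ} (h0 : u 0 ≤ d 0) (h1 : u 1 ≤ d 1) : Wt u ≤ Wt d := by
  unfold Wt
  have h0' : (u 0 : ℝ) ≤ (d 0 : ℝ) := Nat.cast_le.mpr h0
  have h1' : (u 1 : ℝ) ≤ (d 1 : ℝ) := Nat.cast_le.mpr h1
  nlinarith [Nat.cast_nonneg (α := ℝ) (u 0), Nat.cast_nonneg (α := ℝ) (u 1)]

lemma card_antidiagonal_le (d : Fin 2 →₀ ℕ) :
    ((Finset.HasAntidiagonal.antidiagonal d).card : ℝ) ≤ Wt d := by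
  classical
  have key : (Finset.HasAntidiagonal.antidiagonal d).card ≤ (d 0 + 1) * (d 1 + 1) := by
    have := Finset.card_le_card_of_injOn
      (s := Finset.HasAntidiagonal.antidiagonal d)
      (f := fun p : (Fin 2 →₀ ℕ) × (Fin 2 →₀ ℕ) => (p.1 0, p.1 1))
      (t := Finset.range (d 0 + 1) ×ˢ Finset.range (d 1 + 1)) ?_ ?_
    · simpa [Finset.card_product] using this
    · intro p hp
      rw [Finset.mem_coe, Finset.HasAntidiagonal.mem_antidiagonal] at hp
      have e0 : p.1 0 + p.2 0 = d 0 := by rw [← Finsupp.add_apply, hp]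
      have e1 : p.1 1 + p.2 1 = d 1 := by rw [← Finsupp.add_apply, hp]
      simp only [Finset.mem_coe, Finset.mem_product, Finset.mem_range]
      omega
    · intro p hp q hq hpq
      rw [Finset.mem_coe, Finset.HasAntidiagonal.mem_antidiagonal] at hp hq
      have h1 : p.1 = q.1 := by
        ext a
        have : a = 0 ∨ a = 1 := by omega
        rcases this with rfl | rfl
        · exact congrArg Prod.fst hpq
        · exact congrArg Prod.snd hpq
      have h2 : p.2 = q.2 := by
        have := hp.trans hq.symm
        rw [h1] at this
        exact add_left_cancel this
      exact Prod.ext h1 h2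
  calc ((Finset.HasAntidiagonal.antidiagonal d).card : ℝ) ≤ (((d 0 + 1) * (d 1 + 1) : ℕ) : ℝ) :=
        Nat.cast_le.mpr key
    _ ≤ Wt d := by push_cast; unfold Wt; nlinarith [Nat.cast_nonneg (α := ℝ) (d 0), Nat.cast_nonneg (α := ℝ) (d 1)]

/-- coefficient bound predicate -/
def Bd (k : ℕ) (f : R2) : Prop := ∀ d : Fin 2 →₀ ℕ, ‖coeff d f‖ ≤ Wt d ^ k

lemma Bd.mono {k k' : ℕ} (h : k ≤ k') {f : R2} (hf : Bd k f) : Bd k' f :=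
  fun d => (hf d).trans (pow_le_pow_right₀ (one_le_Wt d) h)

lemma Bd_of_norm_le_one {f : R2} (h : ∀ d, ‖coeff d f‖ ≤ 1) (k : ℕ) : Bd k f :=
  fun d => (h d).trans (one_le_pow₀ (one_le_Wt d))

lemma Bd.mul {k1 k2 : ℕ} {f g : R2} (hf : Bd k1 f) (hg : Bd k2 g) :
    Bd (k1 + k2 + 1) (f * g) := by
  intro d
  classical
  rw [coeff_mul]
  calc ‖∑ p ∈ Finset.HasAntidiagonal.antidiagonal d, coeff p.1 f * coeff p.2 g‖
      ≤ ∑ p ∈ Finset.HasAntidiagonal.antidiagonal d, ‖coeff p.1 f * coeff p.2 g‖ :=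
        norm_sum_le _ _
    _ ≤ ∑ _p ∈ Finset.HasAntidiagonal.antidiagonal d, Wt d ^ k1 * Wt d ^ k2 := by
        refine Finset.sum_le_sum fun p hp => ?_
        rw [Finset.HasAntidiagonal.mem_antidiagonal] at hp
        have e0 : p.1 0 + p.2 0 = d 0 := by rw [← Finsupp.add_apply, hp]
        have e1 : p.1 1 + p.2 1 = d 1 := by rw [← Finsupp.add_apply, hp]
        rw [norm_mul]
        have hf' : ‖coeff p.1 f‖ ≤ Wt d ^ k1 :=
          (hf p.1).trans (pow_le_pow_left₀ (le_trans zero_le_one (one_le_Wt _))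
            (Wt_mono (by omega) (by omega)) k1)
        have hg' : ‖coeff p.2 g‖ ≤ Wt d ^ k2 :=
          (hg p.2).trans (pow_le_pow_left₀ (le_trans zero_le_one (one_le_Wt _))
            (Wt_mono (by omega) (by omega)) k2)
        exact mul_le_mul hf' hg' (norm_nonneg _) (pow_nonneg (Wt_pos d).le _)
    _ = ((Finset.HasAntidiagonal.antidiagonal d).card : ℝ) * (Wt d ^ k1 * Wt d ^ k2) := by
        rw [Finset.sum_const, nsmul_eq_mul]
    _ ≤ Wt d * (Wt d ^ k1 * Wt d ^ k2) := by
        refine mul_le_mul_of_nonneg_right (card_antidiagonal_le d)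
          (mul_nonneg (pow_nonneg (Wt_pos d).le _) (pow_nonneg (Wt_pos d).le _))
    _ = Wt d ^ (k1 + k2 + 1) := by ring

lemma Bd_zero (k : ℕ) : Bd k 0 := by
  intro d
  simp only [map_zero, norm_zero]
  exact pow_nonneg (Wt_pos d).le _

lemma Bd_one (k : ℕ) : Bd k 1 := by
  refine Bd_of_norm_le_one (fun d => ?_) k
  classical
  rw [MvPowerSeries.coeff_one]
  split_ifs <;> simp

lemma Bd_X_pow (v : Fin 2) (n : ℕ) (k : ℕ) : Bd k ((X v : R2) ^ n) :=
  Bd_of_norm_le_one (fun d => norm_coeff_X_pow_le d) k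

lemma Bd_X (v : Fin 2) (k : ℕ) : Bd k (X v : R2) := by
  have := Bd_X_pow v 1 k
  simpa using this

lemma Bd_Sgeo (v : Fin 2) (n : ℕ) (k : ℕ) : Bd k (Sgeo v n) :=
  Bd_of_norm_le_one (fun d => norm_coeff_Sgeo_le d) k

lemma Bd_inv (v : Fin 2) (k : ℕ) : Bd k (((1 : R2) - X v)⁻¹) :=
  Bd_of_norm_le_one (fun d => norm_coeff_inv_le d) k

end DeltaAux
namespace DeltaAux

def BdM (k : ℕ) (M : Matrix (Fin 2) (Fin 2) R2) : Prop := ∀ r c, Bd k (M r c)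

lemma BdM.mono {k k' : ℕ} (h : k ≤ k') {M} (hM : BdM k M) : BdM k' M :=
  fun r c => (hM r c).mono h

lemma BdM_one (k : ℕ) : BdM k 1 := by
  intro r c
  rw [Matrix.one_apply]
  split_ifs
  · exact Bd_one k
  · exact Bd_zero k

lemma BdM.mul {k1 k2 : ℕ} {M M' : Matrix (Fin 2) (Fin 2) R2}
    (hM : BdM k1 M) (hM' : BdM k2 M') : BdM (k1 + k2 + 2) (M * M') := by
  intro r c d
  rw [Matrix.mul_apply, Fin.sum_univ_two, map_add]
  have h1 : ‖coeff d (M r 0 * M' 0 c)‖ ≤ Wt d ^ (k1 + k2 + 1) :=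
    (hM r 0).mul (hM' 0 c) d
  have h2 : ‖coeff d (M r 1 * M' 1 c)‖ ≤ Wt d ^ (k1 + k2 + 1) :=
    (hM r 1).mul (hM' 1 c) d
  calc ‖coeff d (M r 0 * M' 0 c) + coeff d (M r 1 * M' 1 c)‖
      ≤ ‖coeff d (M r 0 * M' 0 c)‖ + ‖coeff d (M r 1 * M' 1 c)‖ := norm_add_le _ _
    _ ≤ Wt d ^ (k1 + k2 + 1) + Wt d ^ (k1 + k2 + 1) := add_le_add h1 h2
    _ = 2 * Wt d ^ (k1 + k2 + 1) := by ring
    _ ≤ Wt d * Wt d ^ (k1 + k2 + 1) :=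
        mul_le_mul_of_nonneg_right (two_le_Wt d) (pow_nonneg (Wt_pos d).le _)
    _ = Wt d ^ (k1 + k2 + 2) := by ring

lemma BdM_A1inf : BdM 1 A1inf := by
  intro r c
  fin_cases r <;> fin_cases c <;> simp [A1inf]
  · exact Bd_zero 1
  · have : Bd 1 (pb * (1 - pa)⁻¹) := by
      have := (Bd_X 1 0).mul (Bd_inv 0 0)
      simpa [pa, pb] using this
    simpa [pa, pb] using this
  · exact Bd_zero 1
  · exact Bd_one 1

lemma BdM_A0inf : BdM 1 A0inf := by
  intro r c
  fin_cases r <;> fin_cases c <;> simp [A0inf]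
  · exact Bd_one 1
  · exact Bd_zero 1
  · have := (Bd_X 0 0).mul (Bd_inv 1 0)
    simpa [pa, pb] using this
  · exact Bd_zero 1

lemma BdM_A1_pow (n : ℕ) : BdM 1 (A1 ^ n) := by
  rw [A1_pow]
  intro r c
  fin_cases r <;> fin_cases c <;> simp
  · exact (Bd_X_pow 0 n 1).mono le_rfl |>.mono le_rfl
  · have := (Bd_X 1 0).mul (Bd_Sgeo 0 n 0)
    simpa [pa, pb] using this
  · exact Bd_zero 1
  · exact Bd_one 1

lemma BdM_A0_pow (n : ℕ) : BdM 1 (A0 ^ n) := by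
  rw [A0_pow]
  intro r c
  fin_cases r <;> fin_cases c <;> simp
  · exact Bd_one 1
  · exact Bd_zero 1
  · have := (Bd_X 0 0).mul (Bd_Sgeo 1 n 0)
    simpa [pa, pb] using this
  · exact Bd_X_pow 1 n 1

lemma BdM_powE1 (e : ℕ∞) : BdM 1 (powE A1 A1inf e) := by
  cases e with
  | top => exact BdM_A1inf
  | coe n => exact BdM_A1_pow n

lemma BdM_powE0 (e : ℕ∞) : BdM 1 (powE A0 A0inf e) := by
  cases e with
  | top => exact BdM_A0inf
  | coe n => exact BdM_A0_pow n

lemma BdM_list_prod : ∀ (l : List (Matrix (Fin 2) (Fin 2) R2)),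
    (∀ M ∈ l, BdM 4 M) → BdM (6 * l.length) l.prod := by
  intro l
  induction l with
  | nil => intro _; simpa using BdM_one 0
  | cons M l ih =>
      intro h
      rw [List.prod_cons]
      have h1 : BdM 4 M := h M (List.mem_cons_self)
      have h2 : BdM (6 * l.length) l.prod := ih fun M' hM' => h M' (List.mem_cons_of_mem _ hM')
      have := h1.mul h2
      refine this.mono ?_
      simp [List.length_cons]
      omega

lemma Bd_gam {N : ℕ} (s : Fin (2 * N) → ℕ∞) : Bd (6 * N) (gam s) := by
  rw [gam, Mmat]
  have h := BdM_list_prod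
    ((List.finRange N).map fun j : Fin N =>
      powE A1 A1inf (s ⟨2 * j.val, by have := j.isLt; omega⟩) *
      powE A0 A0inf (s ⟨2 * j.val + 1, by have := j.isLt; omega⟩))
    (by
      intro M hM
      rw [List.mem_map] at hM
      obtain ⟨j, _, rfl⟩ := hM
      exact ((BdM_powE1 _).mul (BdM_powE0 _)).mono (by omega))
  rw [List.length_map, List.length_finRange] at h
  exact h 0 0

end DeltaAux
namespace DeltaAux

open Filter

def aeq (D : ℕ) (f g : R2) : Prop :=
  ∀ d : Fin 2 →₀ ℕ, d 0 + d 1 ≤ D → coeff d f = coeff d g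

lemma aeq_refl (D : ℕ) (f : R2) : aeq D f f := fun _ _ => rfl

lemma aeq.mul {D : ℕ} {f f' g g' : R2} (hf : aeq D f f') (hg : aeq D g g') :
    aeq D (f * g) (f' * g') := by
  intro d hd
  classical
  rw [coeff_mul, coeff_mul]
  refine Finset.sum_congr rfl fun p hp => ?_
  rw [Finset.HasAntidiagonal.mem_antidiagonal] at hp
  have e0 : p.1 0 + p.2 0 = d 0 := by rw [← Finsupp.add_apply, hp]
  have e1 : p.1 1 + p.2 1 = d 1 := by rw [← Finsupp.add_apply, hp]
  rw [hf p.1 (by omega), hg p.2 (by omega)]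

def aeqM (D : ℕ) (M M' : Matrix (Fin 2) (Fin 2) R2) : Prop :=
  ∀ r c, aeq D (M r c) (M' r c)

lemma aeqM_refl (D : ℕ) (M : Matrix (Fin 2) (Fin 2) R2) : aeqM D M M :=
  fun _ _ => aeq_refl D _

lemma aeqM.mul {D : ℕ} {M M' P P' : Matrix (Fin 2) (Fin 2) R2}
    (hM : aeqM D M M') (hP : aeqM D P P') : aeqM D (M * P) (M' * P') := by
  intro r c d hd
  rw [Matrix.mul_apply, Matrix.mul_apply, Fin.sum_univ_two, Fin.sum_univ_two,
    map_add, map_add, (hM r 0).mul (hP 0 c) d hd, (hM r 1).mul (hP 1 c) d hd]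

lemma aeqM_list_prod {D : ℕ} {ι : Type*} :
    ∀ (l : List ι) (f g : ι → Matrix (Fin 2) (Fin 2) R2),
    (∀ x ∈ l, aeqM D (f x) (g x)) → aeqM D (l.map f).prod (l.map g).prod := by
  intro l
  induction l with
  | nil => intro f g _; simpa using aeqM_refl D 1
  | cons x l ih =>
      intro f g h
      rw [List.map_cons, List.map_cons, List.prod_cons, List.prod_cons]
      exact (h x (List.mem_cons_self)).mul
        (ih f g fun y hy => h y (List.mem_cons_of_mem _ hy))

lemma aeqM_A1_pow {D k : ℕ} (h : D < k) : aeqM D (A1 ^ k) A1inf := by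
  rw [A1_pow]
  intro r c
  fin_cases r <;> fin_cases c <;> simp [A1inf, pa, pb]
  · -- X 0 ^ k vs 0
    intro d hd
    rw [map_zero, coeff_X_pow, if_neg]
    intro hdd
    have : d 0 = k := by rw [hdd, Finsupp.single_eq_same]
    omega
  · -- X 1 * Sgeo 0 k vs X 1 * (1 - X 0)⁻¹
    intro d hd
    have key : (X (1:Fin 2) : R2) * ((1:R2) - X 0)⁻¹
        = X 1 * Sgeo 0 k + (X (0 : Fin 2) : R2) ^ k * (X 1 * (1 - X 0)⁻¹) := by
      conv_lhs => rw [show ((1:R2) - X 0)⁻¹ = Sgeo 0 k + (X (0:Fin 2) : R2) ^ k * (1 - X 0)⁻¹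
        from inv_one_sub_X_eq 0 k]
      ring
    rw [key, map_add, coeff_X_pow_mul_eq_zero (by omega), add_zero]
  · exact aeq_refl D _
  · exact aeq_refl D _

lemma aeqM_A0_pow {D k : ℕ} (h : D < k) : aeqM D (A0 ^ k) A0inf := by
  rw [A0_pow]
  intro r c
  fin_cases r <;> fin_cases c <;> simp [A0inf, pa, pb]
  · exact aeq_refl D _
  · exact aeq_refl D _
  · -- X 0 * Sgeo 1 k vs X 0 * (1 - X 1)⁻¹
    intro d hd
    have key : (X (0:Fin 2) : R2) * ((1:R2) - X 1)⁻¹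
        = X 0 * Sgeo 1 k + (X (1 : Fin 2) : R2) ^ k * (X 0 * (1 - X 1)⁻¹) := by
      conv_lhs => rw [show ((1:R2) - X 1)⁻¹ = Sgeo 1 k + (X (1:Fin 2) : R2) ^ k * (1 - X 1)⁻¹
        from inv_one_sub_X_eq 1 k]
      ring
    rw [key, map_add, coeff_X_pow_mul_eq_zero (by omega), add_zero]
  · -- X 1 ^ k vs 0
    intro d hd
    rw [map_zero, coeff_X_pow, if_neg]
    intro hdd
    have : d 1 = k := by rw [hdd, Finsupp.single_eq_same]
    omega

lemma eventually_aeqM_powE (A Ainf : Matrix (Fin 2) (Fin 2) R2)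
    (hstab : ∀ D k, D < k → aeqM D (A ^ k) Ainf)
    {e : ℕ∞} {en : ℕ → ℕ∞} (h : Tendsto en atTop (nhds e)) (D : ℕ) :
    ∀ᶠ n in atTop, aeqM D (powE A Ainf (en n)) (powE A Ainf e) := by
  cases e with
  | top =>
      have h' := ENat.tendsto_nhds_top_iff_natCast_lt.mp h D
      filter_upwards [h'] with n hn
      cases hk : en n with
      | top => exact aeqM_refl D Ainf
      | coe k =>
          rw [hk] at hn
          have hDk : D < k := by exact_mod_cast hn
          exact hstab D k hDk
  | coe m =>
      rw [ENat.nhds_eq_pure (ENat.coe_ne_top m)] at h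
      have h' := Filter.tendsto_pure.mp h
      filter_upwards [h'] with n hn
      rw [hn]
      exact aeqM_refl D _

lemma gam_coeff_eventually_eq {N : ℕ} (t : Fin (2 * N) → ℕ∞)
    (ts : ℕ → Fin (2 * N) → ℕ∞)
    (hconv : ∀ i, Tendsto (fun n => ts n i) atTop (nhds (t i)))
    (d : Fin 2 →₀ ℕ) :
    ∀ᶠ n in atTop, coeff d (gam (ts n)) = coeff d (gam t) := by
  set D := d 0 + d 1 with hD
  have H : ∀ j : Fin N, ∀ᶠ n in atTop,
      aeqM D
        (powE A1 A1inf (ts n ⟨2 * j.val, by have := j.isLt; omega⟩) *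
          powE A0 A0inf (ts n ⟨2 * j.val + 1, by have := j.isLt; omega⟩))
        (powE A1 A1inf (t ⟨2 * j.val, by have := j.isLt; omega⟩) *
          powE A0 A0inf (t ⟨2 * j.val + 1, by have := j.isLt; omega⟩)) := by
    intro j
    have h1 := eventually_aeqM_powE A1 A1inf (fun D k h => aeqM_A1_pow h)
      (hconv ⟨2 * j.val, by have := j.isLt; omega⟩) D
    have h0 := eventually_aeqM_powE A0 A0inf (fun D k h => aeqM_A0_pow h)
      (hconv ⟨2 * j.val + 1, by have := j.isLt; omega⟩) D
    filter_upwards [h1, h0] with n hn1 hn0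
    exact hn1.mul hn0
  have H' := (Filter.eventually_all (ι := Fin N)).mpr H
  filter_upwards [H'] with n hn
  have := aeqM_list_prod (List.finRange N) _ _ (fun j _ => hn j)
  exact this 0 0 d le_rfl

end DeltaAux
namespace DeltaAux

open Filter

lemma hfun_summable (K : ℕ) :
    Summable (fun n : ℕ => ((n : ℝ) + 2) ^ K * (1/2 : ℝ) ^ n) := by
  have h1 : Summable (fun n : ℕ => (n : ℝ) ^ K * (1/2 : ℝ) ^ n) :=
    summable_pow_mul_geometric_of_norm_lt_one K (by rw [Real.norm_eq_abs, abs_of_pos] <;> norm_num)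
  have h2 : Summable (fun n : ℕ => ((n + 2 : ℕ) : ℝ) ^ K * (1/2 : ℝ) ^ (n + 2)) :=
    (summable_nat_add_iff 2).mpr h1
  have h3 := h2.mul_left 4
  refine h3.congr fun n => ?_
  rw [pow_add]
  push_cast
  ring

lemma coefw_bound {N : ℕ} (s : Fin (2 * N) → ℕ∞) (p : ℕ × ℕ) :
    |coefw p.1 p.2 (gam s)| ≤
      (((p.1 : ℝ) + 2) ^ (6 * N) * (1/2 : ℝ) ^ p.1) *
      (((p.2 : ℝ) + 2) ^ (6 * N) * (1/2 : ℝ) ^ p.2) := by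
  set d : Fin 2 →₀ ℕ := Finsupp.single (0 : Fin 2) p.1 + Finsupp.single 1 p.2 with hd
  have hd0 : d 0 = p.1 := by
    simp [hd, Finsupp.single_apply]
  have hd1 : d 1 = p.2 := by
    simp [hd, Finsupp.single_apply]
  have hb := Bd_gam s d
  have h2 : ((2:ℝ) ^ (p.1 + p.2))⁻¹ = (1/2:ℝ) ^ p.1 * (1/2:ℝ) ^ p.2 := by
    rw [pow_add, mul_inv, one_div, inv_pow, inv_pow]
  calc |coefw p.1 p.2 (gam s)|
      = ((2:ℝ) ^ (p.1 + p.2))⁻¹ * |(coeff d (gam s)).re| := by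
        rw [coefw, abs_mul, abs_of_nonneg (by positivity)]
    _ ≤ ((2:ℝ) ^ (p.1 + p.2))⁻¹ * Wt d ^ (6 * N) := by
        refine mul_le_mul_of_nonneg_left ?_ (by positivity)
        exact (Complex.abs_re_le_norm _).trans hb
    _ = (((p.1 : ℝ) + 2) ^ (6 * N) * (1/2 : ℝ) ^ p.1) *
        (((p.2 : ℝ) + 2) ^ (6 * N) * (1/2 : ℝ) ^ p.2) := by
        rw [h2]
        unfold Wt
        rw [hd0, hd1, mul_pow]
        ring

end DeltaAux

open DeltaAux Filter in
theorem Delta_limit_commute' (N : ℕ) (hN : 1 ≤ N)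
    (t : Fin (2 * N) → ℕ∞) (ht : ∀ i, t i ≠ 0) (a : ℤ)
    (ts : ℕ → Fin (2 * N) → ℕ∞) (hts : ∀ n i, ts n i ≠ 0)
    (hconv : ∀ i, Filter.Tendsto (fun n => ts n i) Filter.atTop (nhds (t i))) :
    Filter.Tendsto (fun n => Delta (ts n) a) Filter.atTop (nhds (Delta t a)) := by
  classical
  simp only [Delta]
  have hfs : Summable (fun n : ℕ => ((n : ℝ) + 2) ^ (6 * N) * (1/2 : ℝ) ^ n) :=
    hfun_summable (6 * N)
  have hb : Summable (fun p : ℕ × ℕ =>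
      (((p.1 : ℝ) + 2) ^ (6 * N) * (1/2 : ℝ) ^ p.1) *
      (((p.2 : ℝ) + 2) ^ (6 * N) * (1/2 : ℝ) ^ p.2)) :=
    hfs.mul_of_nonneg hfs (fun n => by positivity) (fun n => by positivity)
  refine tendsto_tsum_of_dominated_convergence hb ?_ ?_
  · intro p
    by_cases hc : a ≤ (p.1 : ℤ) - (p.2 : ℤ)
    · simp only [if_pos hc]
      have he := gam_coeff_eventually_eq t ts hconv
        (Finsupp.single (0 : Fin 2) p.1 + Finsupp.single 1 p.2)
      refine Tendsto.congr' ?_ (tendsto_const_nhds (x := coefw p.1 p.2 (gam t)))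
      filter_upwards [he] with n hn
      rw [coefw, coefw, hn]
    · simp only [if_neg hc]
      exact tendsto_const_nhds
  · refine Filter.Eventually.of_forall (fun n p => ?_)
    rw [Real.norm_eq_abs]
    by_cases hc : a ≤ (p.1 : ℤ) - (p.2 : ℤ)
    · rw [if_pos hc]
      exact coefw_bound (ts n) p
    · rw [if_neg hc, abs_zero]
      positivity

/-- **Proposition (computing `Δ_𝐭(a)` commutes with limits).**
If `𝐭^{(n)} → 𝐭` componentwise in `ℕ̄₊` (with its usual topology: convergence to a
finite value means being eventually equal to it, convergence to `∞` means tending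
to `∞`), then `Δ_{𝐭^{(n)}}(a) → Δ_𝐭(a)`. -/
theorem Delta_limit_commute (N : ℕ) (hN : 1 ≤ N)
    (t : Fin (2 * N) → ℕ∞) (ht : ∀ i, t i ≠ 0) (a : ℤ)
    (ts : ℕ → Fin (2 * N) → ℕ∞) (hts : ∀ n i, ts n i ≠ 0)
    (hconv : ∀ i, Filter.Tendsto (fun n => ts n i) Filter.atTop (nhds (t i))) :
    Filter.Tendsto (fun n => Delta (ts n) a) Filter.atTop (nhds (Delta t a)) :=
  Delta_limit_commute' N hN t ht a ts hts hconv
end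
end

section
/- For all natural numbers m, n and every complex number x ≠ 1: Σ_{k=0}^{n} binom(m+k, k) x^k = 1/(1−x)^{m+1} − (x^{n+1}/(1−x)) · Σ_{j=0}^{m} binom(m+n+1, m−j) (x/(1−x))^j. -/
open Finset

private lemma key_base (m : ℕ) (z : ℂ) :
    z * ∑ j ∈ range (m+1), ((m+1).choose (m-j) : ℂ) * z ^ j = (1+z)^(m+1) - 1 := by
  have h1 : ∑ j ∈ range (m+1), ((m+1).choose (m-j) : ℂ) * z ^ j
      = ∑ j ∈ range (m+1), ((m+1).choose (j+1) : ℂ) * z ^ j := by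
    refine sum_congr rfl fun j hj => ?_
    have hj' : j ≤ m := by simpa [Nat.lt_succ_iff] using mem_range.mp hj
    have h : m - j = (m+1) - (j+1) := by omega
    rw [h, Nat.choose_symm (by omega)]
  have h2 : (1+z)^(m+1) = ∑ k ∈ range (m+2), ((m+1).choose k : ℂ) * z ^ k := by
    rw [add_comm, add_pow]
    refine sum_congr rfl fun k hk => ?_
    ring
  rw [h1, h2, sum_range_succ' (fun k => ((m+1).choose k : ℂ) * z ^ k) (m+1)]
  simp only [Nat.choose_zero_right, Nat.cast_one, pow_zero, mul_one]
  rw [mul_sum]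
  have h3 : ∀ j ∈ range (m+1), z * (((m+1).choose (j+1) : ℂ) * z ^ j)
      = ((m+1).choose (j+1) : ℂ) * z ^ (j+1) := by
    intro j hj; ring
  rw [sum_congr rfl h3]
  ring

private lemma key (m n : ℕ) (z : ℂ) :
    (1 + z) * (∑ j ∈ range (m+1), ((m+n+1).choose (m-j) : ℂ) * z ^ j)
      - z * (∑ j ∈ range (m+1), ((m+n+2).choose (m-j) : ℂ) * z ^ j)
      = ((m+n+1).choose (n+1) : ℂ) := by
  set Q : ℂ := ∑ j ∈ range m, ((m+n+1).choose (m-j-1) : ℂ) * z ^ j with hQ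
  have e1 : ∑ j ∈ range (m+1), ((m+n+2).choose (m-j) : ℂ) * z ^ j
      = (∑ j ∈ range (m+1), ((m+n+1).choose (m-j) : ℂ) * z ^ j) + Q := by
    rw [sum_range_succ, sum_range_succ (fun j => ((m+n+1).choose (m-j) : ℂ) * z ^ j)]
    have h : ∀ j ∈ range m, ((m+n+2).choose (m-j) : ℂ) * z ^ j
        = ((m+n+1).choose (m-j) : ℂ) * z ^ j + ((m+n+1).choose (m-j-1) : ℂ) * z ^ j := by
      intro j hj
      have hj' : j < m := mem_range.mp hj
      have h1 : m - j = (m - j - 1) + 1 := by omega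
      rw [h1, Nat.choose_succ_succ' ]
      push_cast; ring
    rw [sum_congr rfl h, sum_add_distrib, hQ]
    have h0 : m - m = 0 := by omega
    rw [h0]
    simp only [Nat.choose_zero_right, Nat.cast_one]
    ring
  have e2 : ∑ j ∈ range (m+1), ((m+n+1).choose (m-j) : ℂ) * z ^ j
      = z * Q + ((m+n+1).choose m : ℂ) := by
    rw [sum_range_succ' (fun j => ((m+n+1).choose (m-j) : ℂ) * z ^ j) m]
    simp only [Nat.sub_zero, pow_zero, mul_one]
    rw [hQ, mul_sum]
    congr 1
    refine sum_congr rfl fun j hj => ?_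
    have h : m - (j+1) = m - j - 1 := by omega
    rw [h]; ring
  have hsymm : (m+n+1).choose m = (m+n+1).choose (n+1) := by
    have := Nat.choose_symm (n := m+n+1) (k := m) (by omega)
    have h : m + n + 1 - m = n + 1 := by omega
    rw [h] at this
    exact this.symm
  rw [e1, e2, ← hsymm]
  ring

/-- **Lemma (binomial identity).** For `m, n ∈ ℕ` and `x ∈ ℂ`, `x ≠ 1`:
`Σ_{k=0}^{n} C(m+k,k) x^k = 1/(1−x)^{m+1} − (x^{n+1}/(1−x)) Σ_{j=0}^{m} C(m+n+1, m−j) (x/(1−x))^j`. -/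
theorem sum_binomial_geometric (m n : ℕ) (x : ℂ) (hx : x ≠ 1) :
    ∑ k ∈ Finset.range (n + 1), ((m + k).choose k : ℂ) * x ^ k =
      ((1 - x) ^ (m + 1))⁻¹ -
        (x ^ (n + 1) / (1 - x)) *
          ∑ j ∈ Finset.range (m + 1), ((m + n + 1).choose (m - j) : ℂ) * (x / (1 - x)) ^ j := by
  have hy : (1 : ℂ) - x ≠ 0 := sub_ne_zero.mpr (Ne.symm hx)
  have h1z : 1 + x / (1 - x) = (1 - x)⁻¹ := by field_simp; ring
  induction n with
  | zero =>
      simp only [zero_add, sum_range_one, Nat.add_zero, Nat.choose_zero_right,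
        Nat.cast_one, pow_zero, mul_one, pow_one]
      have hb := key_base m (x / (1 - x))
      rw [h1z, inv_pow] at hb
      rw [show (x : ℂ) / (1 - x) * ∑ j ∈ range (m+1), ((m+0+1).choose (m-j) : ℂ) * (x/(1-x))^j
          = ((1-x)^(m+1))⁻¹ - 1 from hb]
      ring
  | succ n ih =>
      rw [sum_range_succ, ih]
      have hc : (m + (n+1)).choose (n+1) = (m+n+1).choose (n+1) := by
        rfl
      rw [hc]
      have hk := key m n (x / (1 - x))
      have hzn : x ^ (n + 1 + 1) / (1 - x) = x ^ (n+1) * (x / (1 - x)) := by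
        rw [pow_succ]; ring
      have hyn : x ^ (n + 1) / (1 - x) = x ^ (n+1) * (1 + x / (1 - x)) := by
        rw [h1z]; ring
      have hmn : m + (n+1) + 1 = m + n + 2 := by omega
      rw [hmn, hzn, hyn]
      linear_combination (-(x ^ (n+1))) * hk
end

section
/- For every natural number m: Σ_{k=0}^{m} binom(m+k, k) · 4^{−k} = (4/3)^{m+1} − (1/3) · 12^{−m} · Σ_{j=0}^{m} binom(2m+1, j) · 3^j. -/
open Finset

noncomputable def Saux (m : ℕ) : ℝ :=
  ∑ k ∈ Finset.range (m + 1), ((m + k).choose k : ℝ) * (4 : ℝ)⁻¹ ^ k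

noncomputable def Taux (m : ℕ) : ℝ :=
  ∑ j ∈ Finset.range (m + 1), ((2 * m + 1).choose j : ℝ) * 3 ^ j

lemma hS (m : ℕ) :
    3 * Saux (m + 1) =
      4 * Saux m + 2 * ((2 * m + 1).choose m : ℝ) * (4 : ℝ)⁻¹ ^ (m + 1) := by
  have h1 : Saux (m + 1)
      = (∑ k ∈ range (m + 1), ((m + 1 + k).choose k : ℝ) * (4:ℝ)⁻¹ ^ k)
        + ((2 * m + 2).choose (m + 1) : ℝ) * (4:ℝ)⁻¹ ^ (m + 1) := by
    unfold Saux
    rw [Finset.sum_range_succ, show m + 1 + (m + 1) = 2 * m + 2 from by ring]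
  have h2 : Saux (m + 1)
      = (∑ k ∈ range (m + 1),
          (((m + 1 + k).choose k : ℝ) + ((m + 1 + k).choose (k + 1) : ℝ)) * (4:ℝ)⁻¹ ^ (k + 1)) + 1 := by
    unfold Saux
    rw [Finset.sum_range_succ']
    have e : ∀ k : ℕ, m + 1 + (k + 1) = (m + 1 + k) + 1 := fun k => by ring
    simp only [e, Nat.choose_succ_succ]
    push_cast
    norm_num
  have h3 : (∑ k ∈ range (m + 1), ((m + 1 + k).choose (k + 1) : ℝ) * (4:ℝ)⁻¹ ^ (k + 1))
      = Saux m + ((2 * m + 1).choose (m + 1) : ℝ) * (4:ℝ)⁻¹ ^ (m + 1) - 1 := by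
    have h4 : (∑ k ∈ range (m + 2), ((m + k).choose k : ℝ) * (4:ℝ)⁻¹ ^ k)
        = (∑ k ∈ range (m + 1), ((m + 1 + k).choose (k + 1) : ℝ) * (4:ℝ)⁻¹ ^ (k + 1)) + 1 := by
      rw [Finset.sum_range_succ']
      norm_num
      apply Finset.sum_congr rfl
      intro k _
      rw [show m + (k + 1) = m + 1 + k from by ring]
    have h5 : (∑ k ∈ range (m + 2), ((m + k).choose k : ℝ) * (4:ℝ)⁻¹ ^ k)
        = Saux m + ((2 * m + 1).choose (m + 1) : ℝ) * (4:ℝ)⁻¹ ^ (m + 1) := by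
      unfold Saux
      rw [Finset.sum_range_succ, show m + (m + 1) = 2 * m + 1 from by ring]
    linarith [h4, h5]
  have h6 : (∑ k ∈ range (m + 1), ((m + 1 + k).choose k : ℝ) * (4:ℝ)⁻¹ ^ (k + 1))
      = (4:ℝ)⁻¹ * (∑ k ∈ range (m + 1), ((m + 1 + k).choose k : ℝ) * (4:ℝ)⁻¹ ^ k) := by
    rw [Finset.mul_sum]
    apply Finset.sum_congr rfl
    intro k _
    ring
  have hsymm : (2 * m + 1).choose (m + 1) = (2 * m + 1).choose m := by
    have h := Nat.choose_symm (show m ≤ 2 * m + 1 by omega)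
    rw [show 2 * m + 1 - m = m + 1 from by omega] at h
    omega
  have hpas : (2 * m + 2).choose (m + 1) = (2 * m + 1).choose m + (2 * m + 1).choose (m + 1) := by
    rw [show 2 * m + 2 = (2 * m + 1) + 1 from by omega, Nat.choose_succ_succ']
  set C := ((2 * m + 1).choose m : ℝ) with hC
  have hCa : ((2 * m + 2).choose (m + 1) : ℝ) = 2 * C := by
    rw [hpas, hsymm]; push_cast; ring
  have hCb : ((2 * m + 1).choose (m + 1) : ℝ) = C := by rw [hsymm]
  have h2' : Saux (m + 1)
      = (∑ k ∈ range (m + 1), ((m + 1 + k).choose k : ℝ) * (4:ℝ)⁻¹ ^ (k + 1))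
        + (∑ k ∈ range (m + 1), ((m + 1 + k).choose (k + 1) : ℝ) * (4:ℝ)⁻¹ ^ (k + 1)) + 1 := by
    rw [h2, ← Finset.sum_add_distrib]
    congr 1
    apply Finset.sum_congr rfl
    intro k _
    ring
  rw [hCa] at h1
  rw [hCb] at h3
  rw [h6, h3] at h2'
  have hA : (∑ k ∈ range (m + 1), ((m + 1 + k).choose k : ℝ) * (4:ℝ)⁻¹ ^ k)
      = Saux (m + 1) - 2 * C * (4:ℝ)⁻¹ ^ (m + 1) := by linarith [h1]
  rw [hA] at h2'
  linear_combination 4 * h2'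

lemma hT (m : ℕ) :
    Taux (m + 1) = 16 * Taux m - 2 * 3 ^ (m + 1) * ((2 * m + 1).choose m : ℝ) := by
  have hsymm : (2 * m + 1).choose (m + 1) = (2 * m + 1).choose m := by
    have h := Nat.choose_symm (show m ≤ 2 * m + 1 by omega)
    rw [show 2 * m + 1 - m = m + 1 from by omega] at h
    omega
  have hCa : ((2 * m + 2).choose (m + 1) : ℝ) = 2 * ((2 * m + 1).choose m : ℝ) := by
    rw [show 2 * m + 2 = (2 * m + 1) + 1 from by omega, Nat.choose_succ_succ', hsymm]
    push_cast; ring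
  set C := ((2 * m + 1).choose m : ℝ) with hC
  -- auxiliary sum
  set U := ∑ j ∈ range (m + 1), ((2 * m + 2).choose j : ℝ) * 3 ^ j with hU
  -- U = 4 * Taux m - 3^(m+1) * C
  have hW : (∑ j ∈ range (m + 1), ((2 * m + 1).choose j : ℝ) * 3 ^ j)
      = Taux m := rfl
  have hWm : (∑ j ∈ range m, ((2 * m + 1).choose j : ℝ) * 3 ^ j)
      = Taux m - C * 3 ^ m := by
    have := Finset.sum_range_succ (fun j => ((2 * m + 1).choose j : ℝ) * 3 ^ j) m
    rw [hW] at this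
    linarith [this]
  have hU1 : U = 4 * Taux m - 3 ^ (m + 1) * C := by
    rw [hU, Finset.sum_range_succ']
    have e : ∀ j : ℕ, (2 * m + 2).choose (j + 1) = (2 * m + 1).choose j + (2 * m + 1).choose (j + 1) := by
      intro j
      rw [show 2 * m + 2 = (2 * m + 1) + 1 from by omega, Nat.choose_succ_succ']
    simp only [e]
    push_cast
    have split : (∑ j ∈ range m,
        (((2 * m + 1).choose j : ℝ) + ((2 * m + 1).choose (j + 1) : ℝ)) * 3 ^ (j + 1))
        = (∑ j ∈ range m, ((2 * m + 1).choose j : ℝ) * 3 ^ (j + 1))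
          + (∑ j ∈ range m, ((2 * m + 1).choose (j + 1) : ℝ) * 3 ^ (j + 1)) := by
      rw [← Finset.sum_add_distrib]
      apply Finset.sum_congr rfl
      intro j _; ring
    rw [split]
    have hA : (∑ j ∈ range m, ((2 * m + 1).choose j : ℝ) * 3 ^ (j + 1))
        = 3 * (Taux m - C * 3 ^ m) := by
      rw [← hWm, Finset.mul_sum]
      apply Finset.sum_congr rfl
      intro j _; ring
    have hB : (∑ j ∈ range m, ((2 * m + 1).choose (j + 1) : ℝ) * 3 ^ (j + 1))
        = Taux m - 1 := by
      have := Finset.sum_range_succ' (fun j => ((2 * m + 1).choose j : ℝ) * 3 ^ j) m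
      rw [hW] at this
      simp only [Nat.choose_zero_right, Nat.cast_one, pow_zero, mul_one] at this
      linarith [this]
    rw [hA, hB]
    norm_num
    ring
  -- Taux (m+1) = 4 * U + (2m+2).choose(m+1) * 3^(m+1)
  have hT1 : Taux (m + 1) = 4 * U + ((2 * m + 2).choose (m + 1) : ℝ) * 3 ^ (m + 1) := by
    unfold Taux
    rw [show 2 * (m + 1) + 1 = (2 * m + 2) + 1 from by ring]
    rw [Finset.sum_range_succ']
    have e : ∀ j : ℕ, (2 * m + 2 + 1).choose (j + 1) = (2 * m + 2).choose j + (2 * m + 2).choose (j + 1) := by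
      intro j
      rw [Nat.choose_succ_succ']
    simp only [e]
    push_cast
    have split : (∑ j ∈ range (m + 1),
        (((2 * m + 2).choose j : ℝ) + ((2 * m + 2).choose (j + 1) : ℝ)) * 3 ^ (j + 1))
        = (∑ j ∈ range (m + 1), ((2 * m + 2).choose j : ℝ) * 3 ^ (j + 1))
          + (∑ j ∈ range (m + 1), ((2 * m + 2).choose (j + 1) : ℝ) * 3 ^ (j + 1)) := by
      rw [← Finset.sum_add_distrib]
      apply Finset.sum_congr rfl
      intro j _; ring
    rw [split]
    have hA : (∑ j ∈ range (m + 1), ((2 * m + 2).choose j : ℝ) * 3 ^ (j + 1)) = 3 * U := by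
      rw [hU, Finset.mul_sum]
      apply Finset.sum_congr rfl
      intro j _; ring
    have hB : (∑ j ∈ range (m + 1), ((2 * m + 2).choose (j + 1) : ℝ) * 3 ^ (j + 1))
        = U + ((2 * m + 2).choose (m + 1) : ℝ) * 3 ^ (m + 1) - 1 := by
      have h1 := Finset.sum_range_succ' (fun j => ((2 * m + 2).choose j : ℝ) * 3 ^ j) (m + 1)
      have h2 := Finset.sum_range_succ (fun j => ((2 * m + 2).choose j : ℝ) * 3 ^ j) (m + 1)
      rw [← hU] at h2
      simp only [Nat.choose_zero_right, Nat.cast_one, pow_zero, mul_one] at h1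
      rw [h2] at h1
      linarith [h1]
    rw [hA, hB]
    norm_num
    ring
  rw [hT1, hU1, hCa]
  ring

/-- **Lemma.** `Σ_{k=0}^{m} C(m+k,k) 4^{−k} = (4/3)^{m+1} − (1/3)·12^{−m} Σ_{j=0}^{m} C(2m+1,j) 3^j`. -/
theorem sum_binomial_quarter_pow (m : ℕ) :
    ∑ k ∈ Finset.range (m + 1), ((m + k).choose k : ℝ) * ((4 : ℝ) ^ k)⁻¹ =
      ((4 : ℝ) / 3) ^ (m + 1) -
        (1 / 3) * ((12 : ℝ) ^ m)⁻¹ *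
          ∑ j ∈ Finset.range (m + 1), ((2 * m + 1).choose j : ℝ) * 3 ^ j := by
  have key : ∀ n : ℕ, Saux n = ((4 : ℝ) / 3) ^ (n + 1) - (1 / 3) * ((12 : ℝ) ^ n)⁻¹ * Taux n := by
    intro n
    induction n with
    | zero => simp [Saux, Taux]; norm_num
    | succ n ih =>
      have h1 := hS n
      have h2 := hT n
      rw [ih] at h1
      have h3 : Saux (n + 1) =
          (4 * (((4 : ℝ) / 3) ^ (n + 1) - (1 / 3) * ((12 : ℝ) ^ n)⁻¹ * Taux n)
            + 2 * ((2 * n + 1).choose n : ℝ) * (4 : ℝ)⁻¹ ^ (n + 1)) / 3 := by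
        linarith [h1]
      rw [h3, h2]
      have h4 : (12 : ℝ) ^ n = 3 ^ n * 4 ^ n := by
        rw [show (12 : ℝ) = 3 * 4 from by norm_num, mul_pow]
      have h5 : (12 : ℝ) ^ (n + 1) = 3 ^ (n + 1) * 4 ^ (n + 1) := by
        rw [show (12 : ℝ) = 3 * 4 from by norm_num, mul_pow]
      have h3pos : (0 : ℝ) < 3 ^ n := by positivity
      have h4pos : (0 : ℝ) < 4 ^ n := by positivity
      rw [div_pow, h4, h5]
      simp only [div_pow, inv_pow]
      field_simp
      ring
  have := key m
  rw [Saux, Taux] at this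
  rw [← this]
  apply Finset.sum_congr rfl
  intro k _
  rw [inv_pow]
end

section
/- For every integer n ≥ 1: 1/√(π(n + 1/2)) < binom(2n, n)/4^n < 1/√(πn). -/
open Real Real.Wallis Nat

private lemma W_lt (n : ℕ) : Real.Wallis.W n < Real.pi / 2 := by
  have h1 : W n < W (n + 1) := by
    rw [W_succ]
    have hp := W_pos n
    have : (1 : ℝ) < (2 * n + 2) / (2 * n + 1) * ((2 * n + 2) / (2 * n + 3)) := by
      rw [_root_.div_mul_div_comm, lt_div_iff₀ (by positivity)]
      nlinarith [Nat.cast_nonneg (α := ℝ) n]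
    nlinarith
  exact lt_of_lt_of_le h1 (W_le (n + 1))

private lemma P_sq (n : ℕ) :
    (((2 * n).choose n : ℝ) / 4 ^ n) ^ 2 = 1 / ((2 * (n : ℝ) + 1) * Real.Wallis.W n) := by
  have hc : ((2 * n).choose n : ℝ) * (n ! : ℝ) * (n ! : ℝ) = ((2 * n)! : ℝ) := by
    have := Nat.choose_mul_factorial_mul_factorial (show n ≤ 2 * n by omega)
    have h2 : 2 * n - n = n := by omega
    rw [h2] at this
    exact_mod_cast this
  have hW := Real.Wallis.W_eq_factorial_ratio n
  have hWpos := Real.Wallis.W_pos n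
  have hf : (0:ℝ) < (n ! : ℝ) := by exact_mod_cast Nat.factorial_pos n
  have hf2 : (0:ℝ) < ((2*n)! : ℝ) := by exact_mod_cast Nat.factorial_pos (2*n)
  have h2n : (0:ℝ) < 2 * (n:ℝ) + 1 := by positivity
  have h16 : (2:ℝ) ^ (4 * n) = (4 ^ n) ^ 2 := by
    rw [show (4:ℝ) = 2 ^ 2 by norm_num, ← pow_mul, ← pow_mul]
    congr 1
    omega
  rw [hW, h16]
  have h4 : (0:ℝ) < (4:ℝ) ^ n := by positivity
  field_simp
  linear_combination (((2 * n).choose n : ℝ) * (n ! : ℝ) * (n ! : ℝ) + ((2 * n)! : ℝ)) * hc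

/-- **Lemma (bounds for the central binomial coefficient).** For `n ≥ 1`:
`1/√(π(n+1/2)) < C(2n,n)/4^n < 1/√(πn)`. -/
theorem central_binomial_bounds (n : ℕ) (hn : 1 ≤ n) :
    1 / Real.sqrt (Real.pi * (n + 1 / 2)) < ((2 * n).choose n : ℝ) / 4 ^ n ∧
    ((2 * n).choose n : ℝ) / 4 ^ n < 1 / Real.sqrt (Real.pi * n) := by
  set P : ℝ := ((2 * n).choose n : ℝ) / 4 ^ n with hP
  have hPpos : 0 < P := by
    have : 0 < (2 * n).choose n := Nat.choose_pos (by omega)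
    positivity
  have hsq := P_sq n
  have hWpos := Real.Wallis.W_pos n
  have hWlt := W_lt n
  have hWle := Real.Wallis.le_W n
  have h2n : (0:ℝ) < 2 * (n:ℝ) + 1 := by positivity
  have hn1 : (1:ℝ) ≤ (n:ℝ) := by exact_mod_cast hn
  have hpi := Real.pi_pos
  constructor
  · -- lower bound
    have hlow : 1 / (Real.pi * ((n:ℝ) + 1 / 2)) < P ^ 2 := by
      rw [hsq]
      apply one_div_lt_one_div_of_lt (by positivity)
      nlinarith
    rw [one_div, ← Real.sqrt_inv]
    rw [show (1:ℝ) / (Real.pi * ((n:ℝ) + 1/2)) = (Real.pi * ((n:ℝ) + 1/2))⁻¹ by ring] at hlow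
    exact (Real.sqrt_lt' hPpos).mpr hlow
  · -- upper bound
    have hhigh : P ^ 2 < 1 / (Real.pi * (n:ℝ)) := by
      rw [hsq]
      apply one_div_lt_one_div_of_lt (by positivity)
      have : (2 * (n:ℝ) + 1) / (2 * (n:ℝ) + 2) * (Real.pi / 2) ≤ W n := hWle
      have key : Real.pi * (n:ℝ) < (2 * (n:ℝ) + 1) * ((2 * (n:ℝ) + 1) / (2 * (n:ℝ) + 2) * (Real.pi / 2)) := by
        have heq : (2 * (n:ℝ) + 1) * ((2 * (n:ℝ) + 1) / (2 * (n:ℝ) + 2) * (Real.pi / 2)) = (2 * (n:ℝ) + 1) ^ 2 * Real.pi / (2 * (2 * (n:ℝ) + 2)) := by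
          field_simp
        rw [heq, lt_div_iff₀ (by positivity)]
        nlinarith
      nlinarith
    rw [one_div, ← Real.sqrt_inv]
    rw [show (1:ℝ) / (Real.pi * (n:ℝ)) = (Real.pi * (n:ℝ))⁻¹ by ring] at hhigh
    exact (Real.lt_sqrt hPpos.le).mpr hhigh
end

section
/- Let k ≥ 1 be an integer and t = 2^k − 1. Then the natural density of the set {n ∈ ℕ : s(n+t) ≥ s(n)} exists and equals 2/3 + 1/(3·4^k); that is, (1/M)·#{0 ≤ n < M : s(n+t) ≥ s(n)} → 2/3 + 1/(3·4^k) as M → ∞. In particular this density is strictly greater than 2/3. -/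
def sdig (n : ℕ) : ℕ := (Nat.digits 2 n).sum

namespace CusickAux

lemma sdig_two_mul_add (n b : ℕ) (hb : b < 2) : sdig (2 * n + b) = sdig n + b := by
  rcases Nat.eq_zero_or_pos (2 * n + b) with h | h
  · have hn : n = 0 := by omega
    have hb0 : b = 0 := by omega
    simp [hn, hb0, sdig]
  · unfold sdig
    rw [Nat.digits_def' (by norm_num : 1 < 2) h]
    have h1 : (2 * n + b) % 2 = b := by omega
    have h2 : (2 * n + b) / 2 = n := by omega
    rw [h1, h2, List.sum_cons]
    omega

lemma sdig_add_pow_mul (k : ℕ) : ∀ a q : ℕ, a < 2 ^ k → sdig (a + 2 ^ k * q) = sdig a + sdig q := by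
  induction k with
  | zero => intro a q ha; interval_cases a; simp [sdig]
  | succ k ih =>
    intro a q ha
    have hb : a % 2 < 2 := Nat.mod_lt _ (by norm_num)
    have key : a + 2 ^ (k + 1) * q = 2 * (a / 2 + 2 ^ k * q) + a % 2 := by
      have := Nat.div_add_mod a 2
      ring_nf
      omega
    rw [key, sdig_two_mul_add _ _ hb, ih (a / 2) q (by omega)]
    have h3 := sdig_two_mul_add (a / 2) (a % 2) hb
    have h4 : 2 * (a / 2) + a % 2 = a := Nat.div_add_mod a 2
    rw [h4] at h3
    omega

lemma sdig_pow_sub_one (k : ℕ) : sdig (2 ^ k - 1) = k := by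
  induction k with
  | zero => simp [sdig]
  | succ k ih =>
    have h : 2 ^ (k + 1) - 1 = 2 * (2 ^ k - 1) + 1 := by
      have : 1 ≤ 2 ^ k := Nat.one_le_two_pow
      omega
    rw [h, sdig_two_mul_add _ _ (by norm_num), ih]

lemma v_odd (m : ℕ) : padicValNat 2 (2 * m + 1) = 0 :=
  padicValNat.eq_zero_of_not_dvd (by omega)

lemma v_two_mul (m : ℕ) (hm : m ≠ 0) : padicValNat 2 (2 * m) = padicValNat 2 m + 1 := by
  rw [padicValNat.mul (p := 2) (by norm_num) hm, padicValNat.self (by norm_num)]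
  omega

lemma sdig_succ : ∀ n : ℕ, sdig (n + 1) + padicValNat 2 (n + 1) = sdig n + 1 := by
  intro n
  induction n using Nat.strong_induction_on with
  | _ n ih =>
    rcases Nat.even_or_odd n with ⟨m, hm⟩ | ⟨m, hm⟩
    · subst hm
      have h1 : m + m = 2 * m := by ring
      have h2 := sdig_two_mul_add m 1 (by norm_num)
      have h3 := sdig_two_mul_add m 0 (by norm_num)
      have h4 := v_odd m
      simp only [Nat.add_zero] at h3
      rw [h1]
      have h5 : 2 * m + 1 = 2 * m + 1 := rfl
      omega
    · subst hm
      have h1 : 2 * m + 1 + 1 = 2 * (m + 1) := by ring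
      have h2 := sdig_two_mul_add m 1 (by norm_num)
      have h3 := sdig_two_mul_add (m + 1) 0 (by norm_num)
      have h4 := v_two_mul (m + 1) (by omega)
      have h5 := ih m (by omega)
      rw [h1, h4]
      simp only [Nat.add_zero] at h3
      omega

/-- Divisibility characterization of the Cusick condition. -/
lemma key (k n : ℕ) (hk : 1 ≤ k) :
    (sdig n ≤ sdig (n + (2 ^ k - 1))) ↔
      2 ^ padicValNat 2 (n / 2 ^ k + 1) ∣ n % 2 ^ k := by
  have hpow : 1 ≤ 2 ^ k := Nat.one_le_two_pow
  set q := n / 2 ^ k with hq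
  set r := n % 2 ^ k with hr
  have hrlt : r < 2 ^ k := Nat.mod_lt _ (by omega)
  have hn : 2 ^ k * q + r = n := Nat.div_add_mod n (2 ^ k)
  have hmul : 2 ^ k * (q + 1) = 2 ^ k * q + 2 ^ k := by ring
  rcases Nat.eq_zero_or_pos r with hr0 | hrpos
  · rw [hr0]
    simp only [Nat.dvd_zero, iff_true]
    have h1 : n + (2 ^ k - 1) = (2 ^ k - 1) + 2 ^ k * q := by omega
    have h2 : sdig ((2 ^ k - 1) + 2 ^ k * q) = sdig (2 ^ k - 1) + sdig q :=
      sdig_add_pow_mul k _ q (by omega)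
    have h3 : sdig n = sdig 0 + sdig q := by
      rw [show n = 0 + 2 ^ k * q by omega]
      exact sdig_add_pow_mul k 0 q (by omega)
    rw [h1, h2, h3, sdig_pow_sub_one]
    have : sdig 0 = 0 := by simp [sdig]
    omega
  · have h1 : n + (2 ^ k - 1) = (r - 1) + 2 ^ k * (q + 1) := by omega
    have h2 : sdig (n + (2 ^ k - 1)) = sdig (r - 1) + sdig (q + 1) := by
      rw [h1]; exact sdig_add_pow_mul k _ _ (by omega)
    have h3 : sdig n = sdig r + sdig q := by
      rw [show n = r + 2 ^ k * q by omega]; exact sdig_add_pow_mul k _ _ hrlt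
    have E1 := sdig_succ q
    have E2 := sdig_succ (r - 1)
    have hrr : r - 1 + 1 = r := by omega
    rw [hrr] at E2
    have hdvd : 2 ^ padicValNat 2 (q + 1) ∣ r ↔
        padicValNat 2 (q + 1) ≤ padicValNat 2 r :=
      padicValNat_dvd_iff_le (by omega)
    rw [h2, h3, hdvd]
    omega

lemma v_lt_of_dvd_lt {c r k : ℕ} (hr : r ≠ 0) (hrlt : r < 2 ^ k) (h : 2 ^ c ∣ r) : c < k := by
  have := Nat.le_of_dvd (by omega) h
  have h2 : 2 ^ c < 2 ^ k := by omega
  exact (Nat.pow_lt_pow_iff_right (by norm_num)).mp h2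

/-- valuation is unchanged by adding `2 ^ k` when it is `< k`. -/
lemma v_add_pow {k x : ℕ} (hx : x ≠ 0) (h : padicValNat 2 x < k) :
    padicValNat 2 (x + 2 ^ k) = padicValNat 2 x := by
  have hx2 : x + 2 ^ k ≠ 0 := by positivity
  apply le_antisymm
  · by_contra hlt
    push_neg at hlt
    have h1 : 2 ^ (padicValNat 2 x + 1) ∣ x + 2 ^ k := by
      have ha : (2 : ℕ) ^ (padicValNat 2 x + 1) ∣ 2 ^ (padicValNat 2 (x + 2 ^ k)) :=
        pow_dvd_pow 2 hlt
      exact dvd_trans ha pow_padicValNat_dvd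
    have h2 : (2 : ℕ) ^ (padicValNat 2 x + 1) ∣ 2 ^ k := pow_dvd_pow 2 (by omega)
    have h1' : 2 ^ (padicValNat 2 x + 1) ∣ 2 ^ k + x := by rwa [Nat.add_comm x (2 ^ k)] at h1
    exact pow_succ_padicValNat_not_dvd hx ((Nat.dvd_add_right h2).mp h1')
  · rw [← padicValNat_dvd_iff_le hx2]
    exact Nat.dvd_add pow_padicValNat_dvd (pow_dvd_pow 2 (by omega))

/-- Periodicity mod `4 ^ k` of the Cusick condition. -/
lemma periodic (k n : ℕ) (hk : 1 ≤ k) :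
    (sdig (n + 4 ^ k) ≤ sdig (n + 4 ^ k + (2 ^ k - 1))) ↔
      (sdig n ≤ sdig (n + (2 ^ k - 1))) := by
  have h4 : (4 : ℕ) ^ k = 2 ^ k * 2 ^ k := by rw [← Nat.mul_pow]
  have hpow : 1 ≤ 2 ^ k := Nat.one_le_two_pow
  rw [key k n hk, key k _ hk]
  have hmod : (n + 4 ^ k) % 2 ^ k = n % 2 ^ k := by
    rw [h4, Nat.add_mul_mod_self_left]
  have hdiv : (n + 4 ^ k) / 2 ^ k = n / 2 ^ k + 2 ^ k := by
    rw [h4, Nat.add_mul_div_left _ _ (by omega)]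
  rw [hmod, hdiv]
  set q := n / 2 ^ k
  set r := n % 2 ^ k
  have hrlt : r < 2 ^ k := Nat.mod_lt _ (by omega)
  rcases Nat.eq_zero_or_pos r with hr0 | hrpos
  · simp [hr0]
  · have hrne : r ≠ 0 := by omega
    by_cases hv : padicValNat 2 (q + 1) < k
    · have heq : q + 2 ^ k + 1 = (q + 1) + 2 ^ k := by ring
      rw [heq, v_add_pow (Nat.succ_ne_zero q) hv]
    · push_neg at hv
      have hd : (2 : ℕ) ^ k ∣ q + 1 :=
        (padicValNat_dvd_iff_le (Nat.succ_ne_zero q)).mpr hv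
      have hd2 : (2 : ℕ) ^ k ∣ q + 2 ^ k + 1 := by
        rw [show q + 2 ^ k + 1 = (q + 1) + 2 ^ k by ring]
        exact Nat.dvd_add hd (dvd_refl _)
      have hv2 : k ≤ padicValNat 2 (q + 2 ^ k + 1) :=
        (padicValNat_dvd_iff_le (Nat.succ_ne_zero _)).mp hd2
      constructor
      · intro h
        have := v_lt_of_dvd_lt hrne hrlt h
        omega
      · intro h
        have := v_lt_of_dvd_lt hrne hrlt h
        omega

lemma card_filter_dvd (d m : ℕ) (hd : 0 < d) :
    ((Finset.range (d * m)).filter (fun r => d ∣ r)).card = m := by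
  have himg : (Finset.range (d * m)).filter (fun r => d ∣ r)
      = (Finset.range m).image (fun j => d * j) := by
    ext x
    simp only [Finset.mem_filter, Finset.mem_range, Finset.mem_image]
    constructor
    · rintro ⟨hx, y, rfl⟩
      exact ⟨y, (mul_lt_mul_iff_right₀ hd).mp hx, rfl⟩
    · rintro ⟨y, hy, rfl⟩
      exact ⟨(mul_lt_mul_iff_right₀ hd).mpr hy, ⟨y, rfl⟩⟩
  rw [himg, Finset.card_image_of_injective _ (mul_right_injective₀ hd.ne')]
  exact Finset.card_range m

lemma card_filter_range_mul (P : ℕ → Prop) [DecidablePred P] (b : ℕ) (a : ℕ) :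
    ((Finset.range (a * b)).filter P).card
      = ∑ i ∈ Finset.range a, ((Finset.range b).filter (fun j => P (b * i + j))).card := by
  induction a with
  | zero => simp
  | succ a ih =>
    rw [Finset.sum_range_succ, ← ih]
    have h1 : (a + 1) * b = a * b + b := by ring
    have hdisj : Disjoint ((Finset.range (a * b)).filter P)
        (((Finset.range b).map (addLeftEmbedding (a * b))).filter P) := by
      rw [Finset.disjoint_left]
      intro x hx1 hx2
      simp only [Finset.mem_filter, Finset.mem_range] at hx1
      simp only [Finset.mem_filter, Finset.mem_map, Finset.mem_range,
        addLeftEmbedding_apply] at hx2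
      obtain ⟨⟨y, hy, rfl⟩, -⟩ := hx2
      omega
    rw [h1, Finset.range_add_eq_union, Finset.filter_union,
      Finset.card_union_of_disjoint hdisj, Finset.filter_map, Finset.card_map]
    congr 1
    apply congrArg
    apply Finset.filter_congr
    intro j hj
    simp only [Function.comp_apply, addLeftEmbedding_apply]
    rw [show a * b + j = b * a + j by ring]

lemma sum_range_two_mul (g : ℕ → ℕ) (m : ℕ) : ∑ i ∈ Finset.range (2 * m), g i
    = ∑ i ∈ Finset.range m, (g (2 * i) + g (2 * i + 1)) := by
  induction m with
  | zero => simp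
  | succ m ih =>
    have h : 2 * (m + 1) = 2 * m + 1 + 1 := by ring
    rw [h, Finset.sum_range_succ, Finset.sum_range_succ, ih, Finset.sum_range_succ]
    omega

lemma T_val (k : ℕ) :
    3 * ∑ q ∈ Finset.range (2 ^ k), 2 ^ (k - padicValNat 2 (q + 1)) = 2 * 4 ^ k + 1 := by
  induction k with
  | zero => norm_num [padicValNat.one]
  | succ k ih =>
    have h2 : (2 : ℕ) ^ (k + 1) = 2 * 2 ^ k := by rw [pow_succ]; ring
    rw [h2, sum_range_two_mul]
    have hterm : ∀ i ∈ Finset.range (2 ^ k),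
        2 ^ (k + 1 - padicValNat 2 (2 * i + 1)) + 2 ^ (k + 1 - padicValNat 2 (2 * i + 1 + 1))
        = 2 ^ (k + 1) + 2 ^ (k - padicValNat 2 (i + 1)) := by
      intro i _
      rw [v_odd i]
      have h3 : 2 * i + 1 + 1 = 2 * (i + 1) := by ring
      rw [h3, v_two_mul (i + 1) (Nat.succ_ne_zero i)]
      congr 2
      omega
    rw [Finset.sum_congr rfl hterm, Finset.sum_add_distrib, Finset.sum_const,
      Finset.card_range, smul_eq_mul, Nat.mul_add, ih]
    have h4 : (4 : ℕ) ^ k = 2 ^ k * 2 ^ k := by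
      rw [show (4 : ℕ) = 2 * 2 from rfl, Nat.mul_pow]
    have h41 : (4 : ℕ) ^ (k + 1) = 4 * 4 ^ k := by rw [pow_succ]; ring
    rw [h41, h4, h2]
    ring

lemma count_period (k : ℕ) (hk : 1 ≤ k) :
    3 * ((Finset.range (4 ^ k)).filter (fun n => sdig n ≤ sdig (n + (2 ^ k - 1)))).card
      = 2 * 4 ^ k + 1 := by
  have hpow : (0 : ℕ) < 2 ^ k := Nat.pow_pos (by norm_num)
  have h4 : (4 : ℕ) ^ k = 2 ^ k * 2 ^ k := by
    rw [show (4 : ℕ) = 2 * 2 from rfl, Nat.mul_pow]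
  rw [h4, card_filter_range_mul _ (2 ^ k) (2 ^ k)]
  have hterm : ∀ q ∈ Finset.range (2 ^ k),
      ((Finset.range (2 ^ k)).filter
        (fun j => sdig (2 ^ k * q + j) ≤ sdig (2 ^ k * q + j + (2 ^ k - 1)))).card
      = 2 ^ (k - padicValNat 2 (q + 1)) := by
    intro q hq
    rw [Finset.mem_range] at hq
    have hfe : ((Finset.range (2 ^ k)).filter
        (fun j => sdig (2 ^ k * q + j) ≤ sdig (2 ^ k * q + j + (2 ^ k - 1))))
        = ((Finset.range (2 ^ k)).filter (fun j => 2 ^ padicValNat 2 (q + 1) ∣ j)) := by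
      apply Finset.filter_congr
      intro j hj
      rw [Finset.mem_range] at hj
      rw [key k _ hk]
      have hdiv : (2 ^ k * q + j) / 2 ^ k = q := by
        rw [Nat.mul_add_div hpow, Nat.div_eq_of_lt hj]
        omega
      have hmod : (2 ^ k * q + j) % 2 ^ k = j := by
        rw [Nat.mul_add_mod, Nat.mod_eq_of_lt hj]
      rw [hdiv, hmod]
    rw [hfe]
    have hc : padicValNat 2 (q + 1) ≤ k := by
      have hd : 2 ^ padicValNat 2 (q + 1) ∣ q + 1 := pow_padicValNat_dvd
      have h1 : 2 ^ padicValNat 2 (q + 1) ≤ 2 ^ k :=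
        le_trans (Nat.le_of_dvd (Nat.succ_pos q) hd) hq
      exact (Nat.pow_le_pow_iff_right (by norm_num)).mp h1
    have hsplit : (2 : ℕ) ^ k = 2 ^ padicValNat 2 (q + 1) * 2 ^ (k - padicValNat 2 (q + 1)) := by
      rw [← pow_add]
      congr 1
      omega
    rw [hsplit, card_filter_dvd _ _ (Nat.pow_pos (by norm_num))]
  rw [Finset.sum_congr rfl hterm, ← h4]
  exact T_val k

lemma periodic_iter (P : ℕ → Prop) (T : ℕ) (hper : ∀ n, P (n + T) ↔ P n) :
    ∀ i n, P (T * i + n) ↔ P n := by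
  intro i
  induction i with
  | zero => simp
  | succ i ih =>
    intro n
    have h : T * (i + 1) + n = (T * i + n) + T := by ring
    rw [h, hper, ih]

lemma count_blocks (P : ℕ → Prop) [DecidablePred P] (T c : ℕ)
    (hper : ∀ n, P (n + T) ↔ P n)
    (hc : ((Finset.range T).filter P).card = c) (j : ℕ) :
    ((Finset.range (j * T)).filter P).card = j * c := by
  rw [card_filter_range_mul P T j]
  have hterm : ∀ i ∈ Finset.range j,
      ((Finset.range T).filter (fun x => P (T * i + x))).card = c := by
    intro i _
    rw [← hc]
    congr 1
    apply Finset.filter_congr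
    intro x hx
    rw [periodic_iter P T hper i x]
  rw [Finset.sum_congr rfl hterm, Finset.sum_const, Finset.card_range, smul_eq_mul]

open Filter in
lemma density_of_periodic (P : ℕ → Prop) [DecidablePred P] (T c : ℕ) (hT : 0 < T)
    (hper : ∀ n, P (n + T) ↔ P n) (hc : ((Finset.range T).filter P).card = c) :
    Tendsto (fun M : ℕ => (((Finset.range M).filter P).card : ℝ) / M) atTop
      (nhds ((c : ℝ) / T)) := by
  have hmono : ∀ {A B : ℕ}, A ≤ B →
      ((Finset.range A).filter P).card ≤ ((Finset.range B).filter P).card :=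
    fun h => Finset.card_le_card (Finset.filter_subset_filter _ (Finset.range_subset_range.mpr h))
  have hczero : Tendsto (fun M : ℕ => (c : ℝ) / M) atTop (nhds 0) :=
    tendsto_const_div_atTop_nhds_zero_nat (c : ℝ)
  have hL : Tendsto (fun M : ℕ => (c : ℝ) / T - c / M) atTop (nhds ((c : ℝ) / T)) := by
    have := (tendsto_const_nhds (x := (c : ℝ) / T) (f := atTop)).sub hczero
    simpa using this
  have hU : Tendsto (fun M : ℕ => (c : ℝ) / T + c / M) atTop (nhds ((c : ℝ) / T)) := by
    have := (tendsto_const_nhds (x := (c : ℝ) / T) (f := atTop)).add hczero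
    simpa using this
  apply tendsto_of_tendsto_of_tendsto_of_le_of_le' hL hU
  · filter_upwards [eventually_ge_atTop 1] with M hM
    set n := ((Finset.range M).filter P).card with hn
    set j := M / T with hj
    have hdm : T * j + M % T = M := Nat.div_add_mod M T
    have hmodlt := Nat.mod_lt M hT
    have hcomm : j * T = T * j := Nat.mul_comm j T
    have hsucc : (j + 1) * T = T * j + T := by ring
    have hjT : T * j ≤ M := by omega
    have hjT2 : M < T * j + T := by omega
    have hlow : j * c ≤ n := by
      rw [← count_blocks P T c hper hc j]
      exact hmono (by omega)
    have hc1 : ((j : ℝ) * c) ≤ n := by exact_mod_cast hlow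
    have hc4 : (M : ℝ) < T * j + T := by exact_mod_cast hjT2
    have hMp : (0 : ℝ) < M := by
      have : (1 : ℝ) ≤ M := by exact_mod_cast hM
      linarith
    have hTp : (0 : ℝ) < T := by exact_mod_cast hT
    have hcnn : (0 : ℝ) ≤ c := by positivity
    rw [div_sub_div _ _ (ne_of_gt hTp) (ne_of_gt hMp), div_le_div_iff₀ (by positivity) hMp]
    have e1 : (c : ℝ) * M ≤ c * (T * j) + c * T := by nlinarith
    have e2 : (c : ℝ) * (T * j) ≤ T * n := by nlinarith
    nlinarith
  · filter_upwards [eventually_ge_atTop 1] with M hM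
    set n := ((Finset.range M).filter P).card with hn
    set j := M / T with hj
    have hdm : T * j + M % T = M := Nat.div_add_mod M T
    have hmodlt := Nat.mod_lt M hT
    have hcomm : j * T = T * j := Nat.mul_comm j T
    have hsucc : (j + 1) * T = T * j + T := by ring
    have hjT : T * j ≤ M := by omega
    have hjT2 : M < T * j + T := by omega
    have hup : n ≤ (j + 1) * c := by
      rw [← count_blocks P T c hper hc (j + 1)]
      exact hmono (by omega)
    have hc2 : (n : ℝ) ≤ ((j : ℝ) + 1) * c := by exact_mod_cast hup
    have hc3 : (T : ℝ) * j ≤ M := by exact_mod_cast hjT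
    have hMp : (0 : ℝ) < M := by
      have : (1 : ℝ) ≤ M := by exact_mod_cast hM
      linarith
    have hTp : (0 : ℝ) < T := by exact_mod_cast hT
    have hcnn : (0 : ℝ) ≤ c := by positivity
    rw [div_add_div _ _ (ne_of_gt hTp) (ne_of_gt hMp), div_le_div_iff₀ hMp (by positivity)]
    have e1 : (n : ℝ) * T ≤ (c * (T * j) + c * T) := by nlinarith
    have e2 : (c : ℝ) * (T * j) ≤ c * M := by nlinarith
    nlinarith

end CusickAux

/-- **The case `N = 1` of Cusick's conjecture, with exact density.**
For `k ≥ 1` and `t = 2^k − 1`, the natural density of `{n : s(n+t) ≥ s(n)}` exists and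
equals `2/3 + 1/(3·4^k)`, which is strictly greater than `2/3`. -/
theorem density_one_block (k : ℕ) (hk : 1 ≤ k) :
    Filter.Tendsto
      (fun M : ℕ =>
        (((Finset.range M).filter (fun n => sdig n ≤ sdig (n + (2 ^ k - 1)))).card : ℝ) / M)
      Filter.atTop (nhds (2 / 3 + 1 / (3 * 4 ^ k))) ∧
    (2 / 3 : ℝ) < 2 / 3 + 1 / (3 * 4 ^ k) := by
  constructor
  · set c := ((Finset.range (4 ^ k)).filter (fun n => sdig n ≤ sdig (n + (2 ^ k - 1)))).card
      with hcdef
    have h3c : 3 * c = 2 * 4 ^ k + 1 := CusickAux.count_period k hk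
    have hT : (0 : ℕ) < 4 ^ k := Nat.pow_pos (by norm_num)
    have hper : ∀ n, (sdig (n + 4 ^ k) ≤ sdig (n + 4 ^ k + (2 ^ k - 1))) ↔
        (sdig n ≤ sdig (n + (2 ^ k - 1))) := fun n => CusickAux.periodic k n hk
    have hdens := CusickAux.density_of_periodic
      (fun n => sdig n ≤ sdig (n + (2 ^ k - 1))) (4 ^ k) c hT hper hcdef.symm
    have heq : (c : ℝ) / (4 ^ k : ℕ) = 2 / 3 + 1 / (3 * 4 ^ k) := by
      have h3cR : (3 : ℝ) * c = 2 * 4 ^ k + 1 := by exact_mod_cast h3c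
      have h4p : (4 : ℝ) ^ k ≠ 0 := by positivity
      have hcval : (c : ℝ) = (2 * 4 ^ k + 1) / 3 := by linarith
      push_cast
      rw [hcval]
      field_simp
    rw [← heq]
    exact hdens
  · have h4p : (0 : ℝ) < 1 / (3 * 4 ^ k) := by positivity
    linarith
end
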